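/- arXiv:1903.00368 — 4 statements merged into one kernel-verified Lean document; each statement's English description precedes it below -/
import Mathlib

section
/- Pole order of the quadratic Hamiltonian (Proposition A.1, pointwise/bilinear-form version). Define P(z) = Σ_{α∈Σ} Σ_{p=0}^{m_α−1} D^α_p (z−z_α)^{−(p+1)}. Then the scalar rational function H(z) = (1/2) B(Γ(z), Γ(z)) − φ(z) P(z) has, at each point z_α, a pole of order at most m_α (even though (1/2)B(Γ(z),Γ(z)) alone may have a pole of order up to 2m_α at z_α). -/
open scoped BigOperators Topology
open Filter

/-- The partial-fraction part `χ(w)` of a twist function (site `a` has multiplicity `m a + 1`). -/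
noncomputable def chiFun {n : ℕ} (z : Fin n → ℂ) (m : Fin n → ℕ)
    (l : Fin n → ℕ → ℂ) (w : ℂ) : ℂ :=
  ∑ a, ∑ p ∈ Finset.range (m a + 1), l a p / (w - z a) ^ (p + 1)

/-- A `V`-valued Gaudin Lax matrix `Γ(w) = Σ_α Σ_p v^α_p (w - z_α)^{-(p+1)}`. -/
noncomputable def gamFun {n : ℕ} {V : Type*} [AddCommGroup V] [Module ℂ V]
    (z : Fin n → ℂ) (m : Fin n → ℕ) (v : Fin n → ℕ → V) (w : ℂ) : V :=
  ∑ a, ∑ p ∈ Finset.range (m a + 1), ((w - z a) ^ (p + 1))⁻¹ • v a p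

/-- The generalised Segal–Sugawara quantity
`D^α_p = (1/2) Σ_{q,r, q+r ≥ p} κ^α_{q+r-p} B(v^α_q, v^α_r)`. -/
noncomputable def ssInt {n : ℕ} {V : Type*} [AddCommGroup V] [Module ℂ V]
    (B : V →ₗ[ℂ] V →ₗ[ℂ] ℂ) (m : Fin n → ℕ) (κ : Fin n → ℕ → ℂ)
    (v : Fin n → ℕ → V) (a : Fin n) (p : ℕ) : ℂ :=
  (1 / 2) * ∑ q ∈ Finset.range (m a + 1), ∑ r ∈ Finset.range (m a + 1),
    if p ≤ q + r then κ a (q + r - p) * B (v a q) (v a r) else 0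


section ScalarLemmas
open Finset

lemma Wlem (M s k : ℕ) (l κ : ℕ → ℂ)
    (hκ0 : ∀ j, j < M → κ j = 0)
    (hκ : ∀ q r : ℕ, q ≤ M → r ≤ M →
      ∑ p ∈ range (M + 1 - r), κ (p + q) * l (p + r) = if q = r then 1 else 0)
    (hs1 : M ≤ s) (hs2 : s ≤ 2 * M) (hk : k ≤ 2 * M) :
    ∑ q ∈ range (M + 1), ∑ p ∈ range (M + 1),
      (if q + p = s ∧ p ≤ k then l q * κ (k - p) else 0) = if k = s then 1 else 0 := by
  by_cases hks : k < s
  · rw [if_neg (by omega)]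
    refine Finset.sum_eq_zero fun q hq => Finset.sum_eq_zero fun p hp => ?_
    simp only [mem_range] at hq hp
    split_ifs with h
    · rw [hκ0 (k - p) (by omega), mul_zero]
    · rfl
  · push_neg at hks
    -- k ≥ s; so p ≤ M ≤ s ≤ k always
    have h1 : ∀ q p : ℕ, q ∈ range (M+1) → p ∈ range (M+1) →
        (if q + p = s ∧ p ≤ k then l q * κ (k - p) else 0)
        = (if q = s - p then (if s - M ≤ p then l (s-p) * κ (k-p) else 0) else 0) := by
      intro q p hq hp
      simp only [mem_range] at hq hp
      by_cases h : q + p = s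
      · rw [if_pos ⟨h, by omega⟩, if_pos (by omega), if_pos (by omega)]
        congr 2
        omega
      · rw [if_neg (by tauto), if_neg (by omega)]
    rw [Finset.sum_congr rfl (fun q hq => Finset.sum_congr rfl (fun p hp => h1 q p hq hp))]
    rw [Finset.sum_comm]
    have h2 : ∀ p ∈ range (M+1),
        (∑ q ∈ range (M+1), if q = s - p then (if s - M ≤ p then l (s-p) * κ (k-p) else 0) else 0)
        = (if s - M ≤ p then l (s-p) * κ (k-p) else 0) := by
      intro p hp
      simp only [mem_range] at hp
      rw [Finset.sum_ite_eq' (range (M+1)) (s - p)]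
      by_cases hc : s - M ≤ p
      · rw [if_pos (by simp only [mem_range]; omega)]
      · simp [hc]
    rw [Finset.sum_congr rfl h2]
    -- reflect: p = M - j
    rw [← Finset.sum_range_reflect]
    have h3 : ∀ j ∈ range (M+1),
        (if s - M ≤ M + 1 - 1 - j then l (s - (M+1-1-j)) * κ (k - (M+1-1-j)) else 0)
        = (if j < M + 1 - (s - M) then κ (j + (k - M)) * l (j + (s - M)) else 0) := by
      intro j hj
      simp only [mem_range] at hj
      by_cases hc : s - M ≤ M + 1 - 1 - j
      · rw [if_pos hc, if_pos (by omega), mul_comm]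
        congr 2 <;> omega
      · rw [if_neg hc, if_neg (by omega)]
    rw [Finset.sum_congr rfl h3]
    have h4 : ∑ j ∈ range (M+1), (if j < M + 1 - (s - M) then κ (j + (k - M)) * l (j + (s - M)) else 0)
        = ∑ j ∈ range (M + 1 - (s - M)), κ (j + (k - M)) * l (j + (s - M)) := by
      rw [Finset.sum_ite, Finset.sum_const_zero, add_zero]
      apply Finset.sum_congr
      · ext j
        simp only [mem_filter, mem_range]
        omega
      · intro j _; rfl
    rw [h4, hκ (k - M) (s - M) (by omega) (by omega)]
    by_cases h5 : k = s
    · rw [if_pos h5, if_pos (by omega)]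
    · rw [if_neg h5, if_neg (by omega)]

lemma sum4 {A : Type*} [AddCommMonoid A] (N : ℕ) (f : ℕ → ℕ → ℕ → ℕ → A) :
    ∑ q ∈ range N, ∑ r ∈ range N, ∑ u ∈ range N, ∑ x ∈ range N, f q r u x
    = ∑ u ∈ range N, ∑ x ∈ range N, ∑ q ∈ range N, ∑ r ∈ range N, f q r u x := by
  calc ∑ q ∈ range N, ∑ r ∈ range N, ∑ u ∈ range N, ∑ x ∈ range N, f q r u x
      = ∑ q ∈ range N, ∑ u ∈ range N, ∑ r ∈ range N, ∑ x ∈ range N, f q r u x :=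
        Finset.sum_congr rfl fun q _ => Finset.sum_comm
    _ = ∑ u ∈ range N, ∑ q ∈ range N, ∑ r ∈ range N, ∑ x ∈ range N, f q r u x :=
        Finset.sum_comm
    _ = ∑ u ∈ range N, ∑ q ∈ range N, ∑ x ∈ range N, ∑ r ∈ range N, f q r u x :=
        Finset.sum_congr rfl fun u _ => Finset.sum_congr rfl fun q _ => Finset.sum_comm
    _ = ∑ u ∈ range N, ∑ x ∈ range N, ∑ q ∈ range N, ∑ r ∈ range N, f q r u x :=
        Finset.sum_congr rfl fun u _ => Finset.sum_comm

lemma cancel (M s : ℕ) (l κ : ℕ → ℂ) (b : ℕ → ℕ → ℂ)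
    (hκ0 : ∀ j, j < M → κ j = 0)
    (hκ : ∀ q r : ℕ, q ≤ M → r ≤ M →
      ∑ p ∈ range (M + 1 - r), κ (p + q) * l (p + r) = if q = r then 1 else 0)
    (hs1 : M ≤ s) (hs2 : s ≤ 2 * M) :
    ∑ q ∈ range (M + 1), ∑ r ∈ range (M + 1),
      (if q + r = s then
        ((1/2) * b q r - l q * ((1/2) * ∑ u ∈ range (M + 1), ∑ x ∈ range (M + 1),
          if r ≤ u + x then κ (u + x - r) * b u x else 0))
       else 0) = 0 := by
  have step1 : ∀ q r : ℕ,
      (if q + r = s then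
        ((1/2) * b q r - l q * ((1/2) * ∑ u ∈ range (M + 1), ∑ x ∈ range (M + 1),
          if r ≤ u + x then κ (u + x - r) * b u x else 0))
       else 0)
      = (if q + r = s then (1/2) * b q r else 0)
        - ∑ u ∈ range (M + 1), ∑ x ∈ range (M + 1),
            (if q + r = s ∧ r ≤ u + x then (1/2) * (b u x * (l q * κ (u + x - r))) else 0) := by
    intro q r
    by_cases h : q + r = s
    · rw [if_pos h, if_pos h]
      congr 1
      simp only [Finset.mul_sum]
      refine Finset.sum_congr rfl fun u _ => Finset.sum_congr rfl fun x _ => ?_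
      by_cases h2 : r ≤ u + x
      · rw [if_pos h2, if_pos ⟨h, h2⟩]; ring
      · rw [if_neg h2, if_neg (by tauto)]; ring
    · simp [h]
  simp only [step1]
  simp only [Finset.sum_sub_distrib]
  rw [sub_eq_zero, eq_comm]
  rw [sum4]
  have inner : ∀ u ∈ range (M+1), ∀ x ∈ range (M+1),
      (∑ q ∈ range (M + 1), ∑ r ∈ range (M + 1),
        (if q + r = s ∧ r ≤ u + x then (1/2 : ℂ) * (b u x * (l q * κ (u + x - r))) else 0))
      = if u + x = s then (1/2) * b u x else 0 := by
    intro u hu x hx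
    simp only [mem_range] at hu hx
    have e1 : ∀ q r : ℕ,
        (if q + r = s ∧ r ≤ u + x then (1/2 : ℂ) * (b u x * (l q * κ (u + x - r))) else 0)
        = ((1/2) * b u x) * (if q + r = s ∧ r ≤ u + x then l q * κ (u + x - r) else 0) := by
      intro q r
      by_cases h : q + r = s ∧ r ≤ u + x
      · rw [if_pos h, if_pos h]; ring
      · rw [if_neg h, if_neg h]; ring
    simp only [e1, ← Finset.mul_sum]
    rw [Wlem M s (u + x) l κ hκ0 hκ hs1 hs2 (by omega)]
    by_cases h : u + x = s
    · rw [if_pos h, if_pos h]; ring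
    · rw [if_neg h, if_neg h]; ring
  exact Finset.sum_congr rfl fun u hu => Finset.sum_congr rfl fun x hx => inner u hu x hx

lemma sum3 {A : Type*} [AddCommMonoid A] (N K : ℕ) (f : ℕ → ℕ → ℕ → A) :
    ∑ q ∈ range N, ∑ r ∈ range N, ∑ s ∈ range K, f q r s
    = ∑ s ∈ range K, ∑ q ∈ range N, ∑ r ∈ range N, f q r s := by
  calc ∑ q ∈ range N, ∑ r ∈ range N, ∑ s ∈ range K, f q r s
      = ∑ q ∈ range N, ∑ s ∈ range K, ∑ r ∈ range N, f q r s :=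
        Finset.sum_congr rfl fun q _ => Finset.sum_comm
    _ = ∑ s ∈ range K, ∑ q ∈ range N, ∑ r ∈ range N, f q r s := Finset.sum_comm

lemma core_cancel (M : ℕ) (c : ℕ → ℕ → ℂ)
    (hc : ∀ s, M ≤ s → s ≤ 2 * M →
      ∑ q ∈ range (M + 1), ∑ r ∈ range (M + 1), (if q + r = s then c q r else 0) = 0)
    (t : ℂ) (ht : t ≠ 0) :
    ∑ q ∈ range (M + 1), ∑ r ∈ range (M + 1),
        t ^ (M + 1) * (c q r * ((t ^ (q + 1))⁻¹ * (t ^ (r + 1))⁻¹))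
    = ∑ q ∈ range (M + 1), ∑ r ∈ range (M + 1),
        (if q + r + 2 ≤ M + 1 then c q r * t ^ (M + 1 - (q + r + 2)) else 0) := by
  have split : ∀ q ∈ range (M+1), ∀ r ∈ range (M+1),
      t ^ (M + 1) * (c q r * ((t ^ (q + 1))⁻¹ * (t ^ (r + 1))⁻¹))
      = (if q + r + 2 ≤ M + 1 then c q r * t ^ (M + 1 - (q + r + 2)) else 0)
        + (if M ≤ q + r then c q r * (t ^ (q + r + 1 - M))⁻¹ else 0) := by
    intro q hq r hr
    simp only [mem_range] at hq hr
    have hmul : (t ^ (q + 1))⁻¹ * (t ^ (r + 1))⁻¹ = (t ^ (q + r + 2))⁻¹ := by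
      rw [← mul_inv, ← pow_add]
      congr 2
      omega
    rw [hmul]
    by_cases h : q + r + 2 ≤ M + 1
    · rw [if_pos h, if_neg (by omega), add_zero]
      rw [pow_sub₀ t ht h]
      ring
    · rw [if_neg h, if_pos (by omega), zero_add]
      have h2 : t ^ (q + r + 2) = t ^ (M + 1) * t ^ (q + r + 1 - M) := by
        rw [← pow_add]
        congr 1
        omega
      rw [h2, mul_inv]
      have h3 : t ^ (M + 1) * (c q r * ((t ^ (M+1))⁻¹ * (t ^ (q + r + 1 - M))⁻¹))
          = (t ^ (M+1) * (t ^ (M+1))⁻¹) * (c q r * (t ^ (q + r + 1 - M))⁻¹) := by ring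
      rw [h3, mul_inv_cancel₀ (pow_ne_zero _ ht), one_mul]
  rw [Finset.sum_congr rfl (fun q hq => Finset.sum_congr rfl (fun r hr => split q hq r hr))]
  simp only [Finset.sum_add_distrib]
  rw [add_eq_left]
  have reindex : ∀ q ∈ range (M+1), ∀ r ∈ range (M+1),
      (if M ≤ q + r then c q r * (t ^ (q + r + 1 - M))⁻¹ else 0)
      = ∑ s ∈ range (M+1), (if q + r = s + M then c q r * (t ^ (s + 1))⁻¹ else 0) := by
    intro q hq r hr
    simp only [mem_range] at hq hr
    have e : ∀ s : ℕ, (if q + r = s + M then c q r * (t ^ (s + 1))⁻¹ else 0)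
        = (if s = q + r - M then (if M ≤ q + r then c q r * (t ^ (q + r + 1 - M))⁻¹ else 0) else 0) := by
      intro s
      by_cases hM : M ≤ q + r
      · by_cases h : q + r = s + M
        · rw [if_pos h, if_pos (by omega), if_pos hM]
          congr 3
          omega
        · rw [if_neg h, if_neg (by omega)]
      · rw [if_neg (by omega : ¬ (q + r = s + M))]
        simp [hM]
    simp only [e]
    rw [Finset.sum_ite_eq' (range (M+1)) (q + r - M)]
    rw [if_pos (show q + r - M ∈ range (M + 1) by simp only [mem_range]; omega)]
  rw [Finset.sum_congr rfl (fun q hq => Finset.sum_congr rfl (fun r hr => reindex q hq r hr))]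
  rw [sum3]
  refine Finset.sum_eq_zero fun s hs => ?_
  simp only [mem_range] at hs
  have e2 : ∀ q r : ℕ, (if q + r = s + M then c q r * (t ^ (s + 1))⁻¹ else 0)
      = (if q + r = s + M then c q r else 0) * (t ^ (s + 1))⁻¹ := by
    intro q r
    split_ifs <;> simp
  simp only [e2, ← Finset.sum_mul]
  rw [hc (s + M) (by omega) (by omega), zero_mul]

end ScalarLemmas

section PoleOrderAux

open Finset

variable {n : ℕ} {V : Type*} [AddCommGroup V] [Module ℂ V]

/-- The regular (at `z a`) part of the Gaudin Lax matrix. -/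
noncomputable def gamAux (z : Fin n → ℂ) (m : Fin n → ℕ) (v : Fin n → ℕ → V)
    (a : Fin n) (w : ℂ) : V :=
  ∑ b ∈ Finset.univ.erase a, ∑ p ∈ Finset.range (m b + 1), ((w - z b) ^ (p + 1))⁻¹ • v b p

/-- The regular (at `z a`) part of the twist function. -/
noncomputable def phiAux (z : Fin n → ℂ) (m : Fin n → ℕ) (l : Fin n → ℕ → ℂ) (linf : ℂ)
    (a : Fin n) (w : ℂ) : ℂ :=
  (∑ b ∈ Finset.univ.erase a, ∑ p ∈ Finset.range (m b + 1), l b p / (w - z b) ^ (p + 1)) - linf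

/-- The regular (at `z a`) part of `P`. -/
noncomputable def pAux (B : V →ₗ[ℂ] V →ₗ[ℂ] ℂ) (z : Fin n → ℂ) (m : Fin n → ℕ)
    (κ : Fin n → ℕ → ℂ) (v : Fin n → ℕ → V) (a : Fin n) (w : ℂ) : ℂ :=
  ∑ b ∈ Finset.univ.erase a, ∑ p ∈ Finset.range (m b + 1),
    ssInt B m κ v b p / (w - z b) ^ (p + 1)

/-- Scalar form of `B x (gamAux w)`. -/
noncomputable def gAux (B : V →ₗ[ℂ] V →ₗ[ℂ] ℂ) (z : Fin n → ℂ) (m : Fin n → ℕ)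
    (v : Fin n → ℕ → V) (a : Fin n) (x : V) (w : ℂ) : ℂ :=
  ∑ b ∈ Finset.univ.erase a, ∑ r ∈ Finset.range (m b + 1),
    ((w - z b) ^ (r + 1))⁻¹ * B x (v b r)

/-- Scalar form of `B (gamAux w) (gamAux w)`. -/
noncomputable def GAux (B : V →ₗ[ℂ] V →ₗ[ℂ] ℂ) (z : Fin n → ℂ) (m : Fin n → ℕ)
    (v : Fin n → ℕ → V) (a : Fin n) (w : ℂ) : ℂ :=
  ∑ b ∈ Finset.univ.erase a, ∑ q ∈ Finset.range (m b + 1),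
    ((w - z b) ^ (q + 1))⁻¹ * gAux B z m v a (v b q) w

/-- The regular extension of `(w - z a)^(m a + 1) * H(w)` near `z a`. -/
noncomputable def AAux (B : V →ₗ[ℂ] V →ₗ[ℂ] ℂ) (z : Fin n → ℂ) (m : Fin n → ℕ)
    (l : Fin n → ℕ → ℂ) (linf : ℂ) (κ : Fin n → ℕ → ℂ) (v : Fin n → ℕ → V)
    (a : Fin n) (w : ℂ) : ℂ :=
  (∑ q ∈ Finset.range (m a + 1), ∑ r ∈ Finset.range (m a + 1),
    if q + r + 2 ≤ m a + 1 then
      ((1/2) * B (v a q) (v a r) - l a q * ssInt B m κ v a r) * (w - z a) ^ (m a + 1 - (q + r + 2))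
    else 0)
  + (∑ p ∈ Finset.range (m a + 1), (w - z a) ^ (m a - p) *
      (gAux B z m v a (v a p) w -
        (l a p * pAux B z m κ v a w + phiAux z m l linf a w * ssInt B m κ v a p)))
  + (w - z a) ^ (m a + 1) *
      ((1/2) * GAux B z m v a w - phiAux z m l linf a w * pAux B z m κ v a w)

lemma contAAux (B : V →ₗ[ℂ] V →ₗ[ℂ] ℂ) (z : Fin n → ℂ) (m : Fin n → ℕ)
    (l : Fin n → ℕ → ℂ) (linf : ℂ) (κ : Fin n → ℕ → ℂ) (v : Fin n → ℕ → V)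
    (a : Fin n) (hz : Function.Injective z) :
    ContinuousAt (AAux B z m l linf κ v a) (z a) := by
  have hne : ∀ b ∈ Finset.univ.erase a, ∀ k : ℕ, (z a - z b) ^ k ≠ 0 := by
    intro b hb k
    exact pow_ne_zero _ (sub_ne_zero.mpr fun h => Finset.ne_of_mem_erase hb (hz h).symm)
  have hinv : ∀ b ∈ Finset.univ.erase a, ∀ k : ℕ,
      ContinuousAt (fun w : ℂ => ((w - z b) ^ k)⁻¹) (z a) := by
    intro b hb k
    exact ContinuousAt.inv₀ (by fun_prop) (hne b hb k)
  have hgc : ∀ x : V, ContinuousAt (fun w => gAux B z m v a x w) (z a) := by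
    intro x
    exact tendsto_finset_sum _ fun b hb => tendsto_finset_sum _ fun r _ =>
      (hinv b hb (r+1)).mul continuousAt_const
  have hφc : ContinuousAt (phiAux z m l linf a) (z a) := by
    apply ContinuousAt.sub ?_ continuousAt_const
    exact tendsto_finset_sum _ fun b hb => tendsto_finset_sum _ fun p _ =>
      ContinuousAt.div₀ continuousAt_const (by fun_prop) (hne b hb (p+1))
  have hPc : ContinuousAt (pAux B z m κ v a) (z a) := by
    exact tendsto_finset_sum _ fun b hb => tendsto_finset_sum _ fun p _ =>
      ContinuousAt.div₀ continuousAt_const (by fun_prop) (hne b hb (p+1))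
  have hGc : ContinuousAt (GAux B z m v a) (z a) := by
    exact tendsto_finset_sum _ fun b hb => tendsto_finset_sum _ fun q _ =>
      (hinv b hb (q+1)).mul (hgc (v b q))
  apply ContinuousAt.add
  apply ContinuousAt.add
  · refine tendsto_finset_sum _ fun q _ => tendsto_finset_sum _ fun r _ => ?_
    by_cases h : q + r + 2 ≤ m a + 1
    · simp only [if_pos h]
      exact continuousAt_const.mul (by fun_prop)
    · simp only [if_neg h]
      exact continuousAt_const
  · refine tendsto_finset_sum _ fun p _ => ?_
    exact (by fun_prop : ContinuousAt (fun w : ℂ => (w - z a) ^ (m a - p)) (z a)).mul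
      ((hgc (v a p)).sub ((continuousAt_const.mul hPc).add (hφc.mul continuousAt_const)))
  · exact (by fun_prop : ContinuousAt (fun w : ℂ => (w - z a) ^ (m a + 1)) (z a)).mul
      ((continuousAt_const.mul hGc).sub (hφc.mul hPc))

lemma identityAux (B : V →ₗ[ℂ] V →ₗ[ℂ] ℂ) (hB : ∀ x y, B x y = B y x)
    (z : Fin n → ℂ) (m : Fin n → ℕ) (l : Fin n → ℕ → ℂ) (linf : ℂ)
    (κ : Fin n → ℕ → ℂ) (v : Fin n → ℕ → V) (a : Fin n)
    (hκ0 : ∀ j, j < m a → κ a j = 0)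
    (hκa : ∀ q r : ℕ, q ≤ m a → r ≤ m a →
      ∑ p ∈ Finset.range (m a + 1 - r), κ a (p + q) * l a (p + r) = if q = r then 1 else 0)
    (w : ℂ) (hw0 : w ≠ z a) (hw1 : ∀ b ∈ Finset.univ.erase a, w ≠ z b) :
    (w - z a) ^ (m a + 1) *
      ((1 / 2) * B (gamFun z m v w) (gamFun z m v w)
        - (chiFun z m l w - linf) *
            ∑ b, ∑ p ∈ Finset.range (m b + 1), ssInt B m κ v b p / (w - z b) ^ (p + 1))
    = AAux B z m l linf κ v a w := by
  set M := m a with hM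
  have ht : w - z a ≠ 0 := sub_ne_zero.mpr hw0
  -- split off the singular part at `z a`
  have hsplitΓ : gamFun z m v w
      = (∑ p ∈ Finset.range (M + 1), ((w - z a) ^ (p + 1))⁻¹ • v a p) + gamAux z m v a w := by
    simp only [gamFun, gamAux]
    rw [← Finset.add_sum_erase _ _ (Finset.mem_univ a)]
  have hsplitχ : chiFun z m l w - linf
      = (∑ p ∈ Finset.range (M + 1), l a p / (w - z a) ^ (p + 1)) + phiAux z m l linf a w := by
    simp only [chiFun, phiAux]
    rw [← Finset.add_sum_erase _ _ (Finset.mem_univ a)]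
    ring
  have hsplitP : (∑ b, ∑ p ∈ Finset.range (m b + 1), ssInt B m κ v b p / (w - z b) ^ (p + 1))
      = (∑ p ∈ Finset.range (M + 1), ssInt B m κ v a p / (w - z a) ^ (p + 1))
        + pAux B z m κ v a w := by
    simp only [pAux]
    rw [← Finset.add_sum_erase _ _ (Finset.mem_univ a)]
  -- scalar expansions of the bilinear pairings
  have hgam' : ∀ x : V, B x (gamAux z m v a w) = gAux B z m v a x w := by
    intro x
    simp only [gamAux, gAux, map_sum, map_smul, smul_eq_mul]
  have expand1 : ∀ y : V, B (gamAux z m v a w) y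
      = ∑ b ∈ Finset.univ.erase a, ∑ q ∈ Finset.range (m b + 1),
          ((w - z b) ^ (q + 1))⁻¹ * B (v b q) y := by
    intro y
    rw [gamAux, map_sum, LinearMap.sum_apply]
    refine Finset.sum_congr rfl fun b _ => ?_
    rw [map_sum, LinearMap.sum_apply]
    refine Finset.sum_congr rfl fun q _ => ?_
    rw [map_smul, LinearMap.smul_apply, smul_eq_mul]
  have expandGa : ∀ y : V, B (∑ p ∈ Finset.range (M + 1), ((w - z a) ^ (p + 1))⁻¹ • v a p) y
      = ∑ q ∈ Finset.range (M + 1), ((w - z a) ^ (q + 1))⁻¹ * B (v a q) y := by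
    intro y
    rw [map_sum, LinearMap.sum_apply]
    refine Finset.sum_congr rfl fun q _ => ?_
    rw [map_smul, LinearMap.smul_apply, smul_eq_mul]
  have hGam2 : B (gamAux z m v a w) (gamAux z m v a w) = GAux B z m v a w := by
    rw [expand1, GAux]
    refine Finset.sum_congr rfl fun b _ => Finset.sum_congr rfl fun q _ => ?_
    rw [hgam']
  have hBGaGa : B (∑ p ∈ Finset.range (M + 1), ((w - z a) ^ (p + 1))⁻¹ • v a p)
        (∑ p ∈ Finset.range (M + 1), ((w - z a) ^ (p + 1))⁻¹ • v a p)
      = ∑ q ∈ Finset.range (M + 1), ∑ r ∈ Finset.range (M + 1),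
          ((w - z a) ^ (q + 1))⁻¹ * (((w - z a) ^ (r + 1))⁻¹ * B (v a q) (v a r)) := by
    have expandGa2 : ∀ x : V, B x (∑ p ∈ Finset.range (M + 1), ((w - z a) ^ (p + 1))⁻¹ • v a p)
        = ∑ r ∈ Finset.range (M + 1), ((w - z a) ^ (r + 1))⁻¹ * B x (v a r) := by
      intro x
      rw [map_sum (B x) (fun p => ((w - z a) ^ (p + 1))⁻¹ • v a p) (Finset.range (M + 1))]
      refine Finset.sum_congr rfl fun r _ => ?_
      rw [map_smul, smul_eq_mul]
    rw [expandGa]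
    refine Finset.sum_congr rfl fun q _ => ?_
    rw [expandGa2, Finset.mul_sum]
  have hBGaΓ' : B (∑ p ∈ Finset.range (M + 1), ((w - z a) ^ (p + 1))⁻¹ • v a p)
        (gamAux z m v a w)
      = ∑ p ∈ Finset.range (M + 1), ((w - z a) ^ (p + 1))⁻¹ * gAux B z m v a (v a p) w := by
    rw [expandGa]
    refine Finset.sum_congr rfl fun p _ => ?_
    rw [hgam']
  -- the three brackets
  have hc : ∀ s, M ≤ s → s ≤ 2 * M →
      ∑ q ∈ Finset.range (M + 1), ∑ r ∈ Finset.range (M + 1),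
        (if q + r = s then
          ((1/2) * B (v a q) (v a r) - l a q * ssInt B m κ v a r) else 0) = 0 := by
    intro s hs1 hs2
    have H := cancel M s (l a) (κ a) (fun u x => B (v a u) (v a x)) hκ0 hκa hs1 hs2
    simpa [ssInt, hM] using H
  have br1 : (w - z a) ^ (M + 1) *
      ((1/2) * (∑ q ∈ Finset.range (M + 1), ∑ r ∈ Finset.range (M + 1),
          ((w - z a) ^ (q + 1))⁻¹ * (((w - z a) ^ (r + 1))⁻¹ * B (v a q) (v a r)))
       - (∑ p ∈ Finset.range (M + 1), l a p / (w - z a) ^ (p + 1))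
         * (∑ p ∈ Finset.range (M + 1), ssInt B m κ v a p / (w - z a) ^ (p + 1)))
      = ∑ q ∈ Finset.range (M + 1), ∑ r ∈ Finset.range (M + 1),
          (if q + r + 2 ≤ M + 1 then
            ((1/2) * B (v a q) (v a r) - l a q * ssInt B m κ v a r)
              * (w - z a) ^ (M + 1 - (q + r + 2)) else 0) := by
    have e1 : (1/2 : ℂ) * (∑ q ∈ Finset.range (M + 1), ∑ r ∈ Finset.range (M + 1),
          ((w - z a) ^ (q + 1))⁻¹ * (((w - z a) ^ (r + 1))⁻¹ * B (v a q) (v a r)))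
        - (∑ p ∈ Finset.range (M + 1), l a p / (w - z a) ^ (p + 1))
          * (∑ p ∈ Finset.range (M + 1), ssInt B m κ v a p / (w - z a) ^ (p + 1))
        = ∑ q ∈ Finset.range (M + 1), ∑ r ∈ Finset.range (M + 1),
            (((1/2) * B (v a q) (v a r) - l a q * ssInt B m κ v a r)
              * (((w - z a) ^ (q + 1))⁻¹ * ((w - z a) ^ (r + 1))⁻¹)) := by
      rw [Finset.sum_mul_sum]
      simp only [Finset.mul_sum]
      rw [← Finset.sum_sub_distrib]
      refine Finset.sum_congr rfl fun q _ => ?_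
      rw [← Finset.sum_sub_distrib]
      refine Finset.sum_congr rfl fun r _ => ?_
      simp only [div_eq_mul_inv]
      ring
    rw [e1, Finset.mul_sum]
    simp only [Finset.mul_sum]
    have e2 := core_cancel M
      (fun q r => (1/2) * B (v a q) (v a r) - l a q * ssInt B m κ v a r) hc (w - z a) ht
    have e3 : ∀ q r : ℕ,
        (if q + r + 2 ≤ M + 1 then
          ((1/2) * B (v a q) (v a r) - l a q * ssInt B m κ v a r)
            * (w - z a) ^ (M + 1 - (q + r + 2)) else 0)
        = (if q + r + 2 ≤ M + 1 then
          ((fun q r => (1/2) * B (v a q) (v a r) - l a q * ssInt B m κ v a r) q r)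
            * (w - z a) ^ (M + 1 - (q + r + 2)) else 0) := fun q r => rfl
    simp only [e3]
    rw [← e2]
  have hpw : ∀ p ∈ Finset.range (M + 1),
      (w - z a) ^ (M + 1) * ((w - z a) ^ (p + 1))⁻¹ = (w - z a) ^ (M - p) := by
    intro p hp
    simp only [Finset.mem_range] at hp
    have h1 : M - p = M + 1 - (p + 1) := by omega
    rw [h1, pow_sub₀ _ ht (by omega)]
  have br2 : (w - z a) ^ (M + 1) *
      ((∑ p ∈ Finset.range (M + 1), ((w - z a) ^ (p + 1))⁻¹ * gAux B z m v a (v a p) w)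
        - ((∑ p ∈ Finset.range (M + 1), l a p / (w - z a) ^ (p + 1)) * pAux B z m κ v a w
          + phiAux z m l linf a w
            * ∑ p ∈ Finset.range (M + 1), ssInt B m κ v a p / (w - z a) ^ (p + 1)))
      = ∑ p ∈ Finset.range (M + 1), (w - z a) ^ (M - p) *
          (gAux B z m v a (v a p) w -
            (l a p * pAux B z m κ v a w + phiAux z m l linf a w * ssInt B m κ v a p)) := by
    rw [Finset.sum_mul]
    rw [Finset.mul_sum (Finset.range (M + 1))
      (fun p => ssInt B m κ v a p / (w - z a) ^ (p + 1)) (phiAux z m l linf a w)]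
    rw [← Finset.sum_add_distrib, ← Finset.sum_sub_distrib, Finset.mul_sum]
    refine Finset.sum_congr rfl fun p hp => ?_
    rw [← hpw p hp]
    simp only [div_eq_mul_inv]
    ring
  -- assemble
  rw [hsplitΓ, hsplitχ, hsplitP]
  simp only [map_add, LinearMap.add_apply]
  rw [hB (gamAux z m v a w)
    (∑ p ∈ Finset.range (M + 1), ((w - z a) ^ (p + 1))⁻¹ • v a p)]
  rw [hGam2, hBGaGa, hBGaΓ']
  rw [AAux, ← hM]
  linear_combination br1 + br2

end PoleOrderAux

/-- **Pole order of the quadratic Hamiltonian** (Proposition A.1, pointwise/bilinear-form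
version).  With `P(z) = Σ_α Σ_p D^α_p (z - z_α)^{-(p+1)}`, the scalar rational function
`H(z) = (1/2) B(Γ(z), Γ(z)) - φ(z) P(z)` has, at each point `z_α`, a pole of order at most
`m_α` (i.e. `(z - z_α)^{m_α} H(z)` is bounded near `z_α`). -/
theorem pole_order_of_quadratic_Hamiltonian
    {n : ℕ} {V : Type*} [AddCommGroup V] [Module ℂ V]
    (B : V →ₗ[ℂ] V →ₗ[ℂ] ℂ) (hB : ∀ x y, B x y = B y x)
    (z : Fin n → ℂ) (m : Fin n → ℕ) (l : Fin n → ℕ → ℂ)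
    (linf : ℂ)
    (hz : Function.Injective z)
    (hl : ∀ a, l a (m a) ≠ 0)
    -- the coefficients `κ^α_p`, characterised by the linear system (2.8) of the paper
    (κ : Fin n → ℕ → ℂ)
    (hκ : ∀ a, ∀ q r : ℕ, q ≤ m a → r ≤ m a →
      ∑ p ∈ Finset.range (m a + 1 - r), κ a (p + q) * l a (p + r)
        = if q = r then 1 else 0)
    (v : Fin n → ℕ → V) :
    ∀ a : Fin n, ∃ C : ℝ,
      ∀ᶠ w in 𝓝[≠] (z a),
        ‖(w - z a) ^ (m a + 1) *
          ((1 / 2) * B (gamFun z m v w) (gamFun z m v w)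
            - (chiFun z m l w - linf) *
              ∑ b, ∑ p ∈ Finset.range (m b + 1),
                ssInt B m κ v b p / (w - z b) ^ (p + 1))‖ ≤ C := by
  intro a
  classical
  have hκ0 : ∀ j, j < m a → κ a j = 0 := by
    intro j hj
    have h := hκ a j (m a) (le_of_lt hj) le_rfl
    rw [if_neg (by omega)] at h
    rw [show m a + 1 - m a = 1 by omega, Finset.sum_range_one, zero_add, zero_add] at h
    exact (mul_eq_zero.mp h).resolve_right (hl a)
  refine ⟨‖AAux B z m l linf κ v a (z a)‖ + 1, ?_⟩
  have hcont : ContinuousAt (AAux B z m l linf κ v a) (z a) := contAAux B z m l linf κ v a hz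
  have hb : ∀ᶠ w in 𝓝[≠] (z a),
      ‖AAux B z m l linf κ v a w‖ < ‖AAux B z m l linf κ v a (z a)‖ + 1 :=
    (hcont.norm.eventually_lt_const (lt_add_one _)).filter_mono nhdsWithin_le_nhds
  have h1 : ∀ᶠ w in 𝓝[≠] (z a), ∀ b ∈ Finset.univ.erase a, w ≠ z b := by
    apply Filter.Eventually.filter_mono nhdsWithin_le_nhds
    rw [Finset.eventually_all]
    intro b hb'
    exact eventually_ne_nhds fun h => Finset.ne_of_mem_erase hb' ((hz h).symm)
  have h2 : ∀ᶠ w in 𝓝[≠] (z a), w ≠ z a := by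
    filter_upwards [self_mem_nhdsWithin] with w hw using hw
  filter_upwards [h1, h2, hb] with w hw1 hw0 hwA
  rw [identityAux B hB z m l linf κ v a hκ0 (hκ a) w hw0 hw1]
  exact le_of_lt hwA
end

section
/- Inversion of the twist function (Lemma A.1 together with the accompanying Remark). Let m ≥ 1, let z_0 ∈ ℂ, and let φ be a nonzero rational function over ℂ with a pole of order exactly m at z_0; write its Laurent expansion at z_0 as φ(z) = Σ_{p ≤ m−1} ℓ_p (z−z_0)^{−(p+1)} (p ranging over integers ≤ m−1), so that ℓ_{m−1} ≠ 0. Then 1/φ extends holomorphically to z_0 with a zero of order exactly m; writing its Taylor expansion as 1/φ(z) = Σ_{p ≥ m−1} μ_p (z−z_0)^{p+1} and setting μ_p = 0 for p < m−1, the coefficients satisfy, for all q, r ∈ {0, …, m−1}: Σ_{p=0}^{m−1−r} μ_{p+q} ℓ_{p+r} = δ_{q,r}. In particular, the numbers κ_p := μ_p for 0 ≤ p ≤ 2m−2 solve the defining linear system of the generalised Segal–Sugawara coefficients, and κ_p = 0 for 0 ≤ p ≤ m−2. -/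
open scoped BigOperators

/-- The Laurent expansion of a rational function `f` at the point `z₀`, as a formal Laurent
series: expand `f(X + z₀)` at `0`. -/
noncomputable def laurentExpansion (z₀ : ℂ) (f : RatFunc ℂ) : LaurentSeries ℂ :=
  (RatFunc.laurent z₀ f : LaurentSeries ℂ)

/-- **Inversion of the twist function** (Lemma A.1 and the accompanying Remark).
Let `φ` be a nonzero rational function with a pole of order exactly `m ≥ 1` at `z₀`, with Laurent
coefficients `ℓ_p` (the coefficient of `(z - z₀)^{-(p+1)}`).  Then `ℓ_{m-1} ≠ 0`, the function
`1/φ` is holomorphic at `z₀` with a zero of order exactly `m`, its Taylor coefficients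
`μ_p` (of `(z - z₀)^{p+1}`) vanish for `p < m - 1`, and for all `q, r ∈ {0, …, m-1}` one has
`Σ_{p=0}^{m-1-r} μ_{p+q} ℓ_{p+r} = δ_{q,r}`. -/
theorem inversion_of_twist_function
    (m : ℕ) (hm : 1 ≤ m) (z₀ : ℂ) (f : RatFunc ℂ) (hf : f ≠ 0)
    (horder : (laurentExpansion z₀ f).order = -(m : ℤ)) :
    -- `ℓ_{m-1} ≠ 0`
    (laurentExpansion z₀ f).coeff (-(m : ℤ)) ≠ 0 ∧
    -- `1/φ` extends holomorphically to `z₀` with a zero of order exactly `m`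
    (laurentExpansion z₀ f)⁻¹.order = (m : ℤ) ∧
    -- `μ_p = 0` for `p < m - 1`
    (∀ p : ℤ, p < (m : ℤ) - 1 → (laurentExpansion z₀ f)⁻¹.coeff (p + 1) = 0) ∧
    -- the linear system `Σ_{p=0}^{m-1-r} μ_{p+q} ℓ_{p+r} = δ_{q,r}`
    (∀ q r : ℕ, q < m → r < m →
      ∑ p ∈ Finset.range (m - r),
        (laurentExpansion z₀ f)⁻¹.coeff ((p : ℤ) + (q : ℤ) + 1)
          * (laurentExpansion z₀ f).coeff (-((p : ℤ) + (r : ℤ) + 1))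
        = if q = r then 1 else 0) := by
  set φ := laurentExpansion z₀ f with hφdef
  have hφ : φ ≠ 0 := by
    simp only [hφdef, laurentExpansion]
    intro h
    apply hf
    have h1 : RatFunc.laurent z₀ f = 0 := by
      have : Function.Injective (fun x : RatFunc ℂ => (x : LaurentSeries ℂ)) := RingHom.injective _
      exact this (by simpa using h)
    have h2 : RatFunc.laurent z₀ f = RatFunc.laurent z₀ 0 := by simp [h1]
    exact RatFunc.laurent_injective z₀ h2
  have hφinv : φ⁻¹ ≠ 0 := inv_ne_zero hφ
  have hmul : φ⁻¹ * φ = 1 := inv_mul_cancel₀ hφ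
  have hordinv : φ⁻¹.order = (m : ℤ) := by
    have := HahnSeries.order_mul hφinv hφ
    rw [hmul, horder] at this
    have h1 : (1 : LaurentSeries ℂ).order = 0 := HahnSeries.order_one
    omega
  refine ⟨by rw [← horder]; exact HahnSeries.coeff_order_eq_zero.not.2 hφ, hordinv, ?_, ?_⟩
  · intro p hp
    apply HahnSeries.coeff_eq_zero_of_lt_order
    rw [hordinv]; omega
  · intro q r hq hr
    have key : (φ⁻¹ * φ).coeff ((q : ℤ) - r) = if q = r then 1 else 0 := by
      rw [hmul, HahnSeries.coeff_one]
      congr 1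
      simp only [sub_eq_zero, Nat.cast_inj, eq_iff_iff]
    rw [HahnSeries.coeff_mul] at key
    rw [← key]
    symm
    refine Finset.sum_bij_ne_zero (fun ij _ _ => (ij.1 - (q : ℤ) - 1).toNat) ?_ ?_ ?_ ?_
    · rintro ⟨a, b⟩ h1 h2
      rw [Finset.mem_addAntidiagonal] at h1
      obtain ⟨ha, hb, hab⟩ := h1
      have ha' : (m : ℤ) ≤ a := hordinv ▸ HahnSeries.order_le_of_coeff_ne_zero ha
      have hb' : -(m : ℤ) ≤ b := horder ▸ HahnSeries.order_le_of_coeff_ne_zero hb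
      simp only [Finset.mem_range]
      omega
    · rintro ⟨a, b⟩ h1 h2 ⟨c, d⟩ h3 h4 heq
      rw [Finset.mem_addAntidiagonal] at h1 h3
      obtain ⟨ha, hb, hab⟩ := h1
      obtain ⟨hc, hd, hcd⟩ := h3
      have ha' : (m : ℤ) ≤ a := hordinv ▸ HahnSeries.order_le_of_coeff_ne_zero ha
      have hc' : (m : ℤ) ≤ c := hordinv ▸ HahnSeries.order_le_of_coeff_ne_zero hc
      have : a = c := by
        have := congrArg (fun n : ℕ => (n : ℤ)) heq
        simp only at this
        omega
      exact Prod.ext this (by omega)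
    · intro p hp hne
      have h1 : φ⁻¹.coeff ((p : ℤ) + q + 1) ≠ 0 := fun h => hne (by rw [h, zero_mul])
      have h2 : φ.coeff (-((p : ℤ) + r + 1)) ≠ 0 := fun h => hne (by rw [h, mul_zero])
      refine ⟨((p : ℤ) + q + 1, -((p : ℤ) + r + 1)), ?_, ?_, ?_⟩
      · rw [Finset.mem_addAntidiagonal]
        exact ⟨h1, h2, by ring⟩
      · exact fun h => hne (by rw [← h])
      · simp only
        omega
    · rintro ⟨a, b⟩ h1 h2
      rw [Finset.mem_addAntidiagonal] at h1
      obtain ⟨ha, hb, hab⟩ := h1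
      have ha' : (m : ℤ) ≤ a := hordinv ▸ HahnSeries.order_le_of_coeff_ne_zero ha
      have hb' : -(m : ℤ) ≤ b := horder ▸ HahnSeries.order_le_of_coeff_ne_zero hb
      have hto : (((a - (q:ℤ) - 1).toNat : ℤ)) = a - q - 1 := Int.toNat_of_nonneg (by omega)
      simp only []
      rw [hto]
      congr 1
      · congr 1
        omega
      · congr 1
        omega
end

section
/- Principal part of the quadratic density (Proposition A.2, pointwise/bilinear-form version). The scalar rational function Q(z) = −B(Γ(z), Γ(z))/(2 φ(z)) satisfies Q(z) = −Σ_{α∈Σ} Σ_{p=0}^{m_α−1} D^α_p (z−z_α)^{−(p+1)} + Q_reg(z), where Q_reg is a rational function that is holomorphic at every point z_α (α ∈ Σ). In other words, at each z_α the principal part of Q is exactly −Σ_{p=0}^{m_α−1} D^α_p (z−z_α)^{−(p+1)}. -/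
open scoped BigOperators Topology
open Filter

namespace PPQD
open Finset



lemma keyIdent (mm N q r : ℕ) (l κ : ℕ → ℂ)
    (hκ : ∀ q' r' : ℕ, q' ≤ mm → r' ≤ mm →
      ∑ p ∈ range (mm + 1 - r'), κ (p + q') * l (p + r') = if q' = r' then 1 else 0)
    (hq : q ≤ mm) (hr : r ≤ mm) (hN1 : mm ≤ N) (hN2 : N ≤ 2 * mm) :
    ∑ p ∈ range (mm + 1), ∑ p' ∈ range (mm + 1),
      (if p + p' = N ∧ p ≤ q + r then l p' * κ (q + r - p) else 0)
      = if q + r = N then 1 else 0 := by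
  have step1 : ∀ p ∈ range (mm + 1),
      (∑ p' ∈ range (mm + 1), if p + p' = N ∧ p ≤ q + r then l p' * κ (q + r - p) else 0)
      = if N ≤ mm + p ∧ p ≤ q + r then l (N - p) * κ (q + r - p) else 0 := by
    intro p hp
    rw [mem_range] at hp
    have h1 : ∀ p' ∈ range (mm + 1),
        (if p + p' = N ∧ p ≤ q + r then l p' * κ (q + r - p) else 0)
        = if p' = N - p then (if p ≤ q + r then l p' * κ (q + r - p) else 0) else 0 := by
      intro p' hp'
      by_cases h1 : p' = N - p
      · subst h1
        have : p + (N - p) = N := by omega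
        by_cases h2 : p ≤ q + r <;> simp [h2, this]
      · have : ¬(p + p' = N) := by omega
        simp [this, h1]
    rw [Finset.sum_congr rfl h1, Finset.sum_ite_eq' (range (mm + 1)) (N - p)]
    simp only [mem_range]
    by_cases hmem : N - p < mm + 1
    · have : N ≤ mm + p := by omega
      simp [hmem, this]
    · have : ¬ (N ≤ mm + p) := by omega
      simp [hmem, this]
  rw [Finset.sum_congr rfl step1]
  by_cases hcase : N ≤ q + r + mm
  · -- nonempty case: reindex to the hκ sum
    set q' := q + r - mm with hq'
    set r' := q' + N - (q + r) with hr'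
    have hq'le : q' ≤ mm := by omega
    have hr'le : r' ≤ mm := by omega
    have := hκ q' r' hq'le hr'le
    have hiff : (q' = r') ↔ (q + r = N) := by omega
    rw [← Finset.sum_filter]
    rw [show (if q + r = N then (1:ℂ) else 0) = if q' = r' then 1 else 0 by
      simp only [hiff]]
    rw [← this]
    apply Finset.sum_nbij' (fun p => q + r - q' - p) (fun j => q + r - q' - j)
    · intro p hp
      simp only [mem_filter, mem_range] at hp ⊢
      omega
    · intro j hj
      simp only [mem_filter, mem_range] at hj ⊢
      omega
    · intro p hp
      simp only [mem_filter, mem_range] at hp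
      omega
    · intro j hj
      simp only [mem_range] at hj
      omega
    · intro p hp
      simp only [mem_filter, mem_range] at hp
      have e1 : q + r - q' - p + q' = q + r - p := by omega
      have e2 : q + r - q' - p + r' = N - p := by omega
      rw [e1, e2, mul_comm]
  · -- empty case
    have hz : ∀ p ∈ range (mm + 1),
        (if N ≤ mm + p ∧ p ≤ q + r then l (N - p) * κ (q + r - p) else 0) = 0 := by
      intro p hp
      rw [mem_range] at hp
      have : ¬(N ≤ mm + p ∧ p ≤ q + r) := by omega
      simp [this]
    rw [Finset.sum_congr rfl hz]
    have : ¬(q + r = N) := by omega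
    simp [this]



lemma sum_swap4 {M : Type*} [AddCommMonoid M] {s1 s2 s3 s4 : Finset ℕ}
    (f : ℕ → ℕ → ℕ → ℕ → M) :
    ∑ p ∈ s1, ∑ p' ∈ s2, ∑ q ∈ s3, ∑ r ∈ s4, f p p' q r
      = ∑ q ∈ s3, ∑ r ∈ s4, ∑ p ∈ s1, ∑ p' ∈ s2, f p p' q r := by
  have h1 : ∀ p, ∑ p' ∈ s2, ∑ q ∈ s3, ∑ r ∈ s4, f p p' q r
      = ∑ q ∈ s3, ∑ p' ∈ s2, ∑ r ∈ s4, f p p' q r := fun p => Finset.sum_comm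
  rw [Finset.sum_congr rfl fun p _ => h1 p, Finset.sum_comm]
  refine Finset.sum_congr rfl fun q _ => ?_
  have h2 : ∀ p, ∑ p' ∈ s2, ∑ r ∈ s4, f p p' q r
      = ∑ r ∈ s4, ∑ p' ∈ s2, f p p' q r := fun p => Finset.sum_comm
  rw [Finset.sum_congr rfl fun p _ => h2 p, Finset.sum_comm]

noncomputable def ssIntAux (mm : ℕ) (κ : ℕ → ℂ) (Bv : ℕ → ℕ → ℂ) (p : ℕ) : ℂ :=
  (1 / 2) * ∑ q ∈ range (mm + 1), ∑ r ∈ range (mm + 1),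
    if p ≤ q + r then κ (q + r - p) * Bv q r else 0

/-- coefficient of the Laurent expansion -/
noncomputable def coefC (mm : ℕ) (l κ : ℕ → ℂ) (Bv : ℕ → ℕ → ℂ) (N : ℕ) : ℂ :=
  2 * ∑ p ∈ range (mm + 1), ∑ p' ∈ range (mm + 1),
      (if p + p' = N then l p' * ssIntAux mm κ Bv p else 0)
    - ∑ q ∈ range (mm + 1), ∑ r ∈ range (mm + 1), (if q + r = N then Bv q r else 0)

lemma coefC_eq_zero (mm N : ℕ) (l κ : ℕ → ℂ) (Bv : ℕ → ℕ → ℂ)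
    (hκ : ∀ q' r' : ℕ, q' ≤ mm → r' ≤ mm →
      ∑ p ∈ range (mm + 1 - r'), κ (p + q') * l (p + r') = if q' = r' then 1 else 0)
    (hN1 : mm ≤ N) (hN2 : N ≤ 2 * mm) :
    coefC mm l κ Bv N = 0 := by
  rw [coefC, sub_eq_zero]
  have expand : ∀ p p' : ℕ,
      (2:ℂ) * (if p + p' = N then l p' * ssIntAux mm κ Bv p else 0)
      = ∑ q ∈ range (mm + 1), ∑ r ∈ range (mm + 1),
          (if p + p' = N ∧ p ≤ q + r then l p' * κ (q + r - p) else 0) * Bv q r := by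
    intro p p'
    rw [ssIntAux]
    by_cases hc : p + p' = N
    · rw [if_pos hc]
      have h2 : ∀ (S : ℂ), (2:ℂ) * (l p' * (1/2 * S)) = l p' * S := fun S => by ring
      rw [h2, Finset.mul_sum]
      refine Finset.sum_congr rfl fun q _ => ?_
      rw [Finset.mul_sum]
      refine Finset.sum_congr rfl fun r _ => ?_
      by_cases h3 : p ≤ q + r
      · rw [if_pos h3, if_pos ⟨hc, h3⟩]; ring
      · rw [if_neg h3, if_neg (by tauto), mul_zero, zero_mul]
    · rw [if_neg hc, mul_zero]
      refine (Finset.sum_eq_zero fun q _ => Finset.sum_eq_zero fun r _ => ?_).symm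
      rw [if_neg (by tauto), zero_mul]
  calc 2 * ∑ p ∈ range (mm + 1), ∑ p' ∈ range (mm + 1),
        (if p + p' = N then l p' * ssIntAux mm κ Bv p else 0)
      = ∑ p ∈ range (mm + 1), ∑ p' ∈ range (mm + 1),
        ∑ q ∈ range (mm + 1), ∑ r ∈ range (mm + 1),
          (if p + p' = N ∧ p ≤ q + r then l p' * κ (q + r - p) else 0) * Bv q r := by
        rw [Finset.mul_sum]
        refine Finset.sum_congr rfl fun p _ => ?_
        rw [Finset.mul_sum]
        exact Finset.sum_congr rfl fun p' _ => expand p p'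
    _ = ∑ q ∈ range (mm + 1), ∑ r ∈ range (mm + 1),
        (∑ p ∈ range (mm + 1), ∑ p' ∈ range (mm + 1),
          (if p + p' = N ∧ p ≤ q + r then l p' * κ (q + r - p) else 0)) * Bv q r := by
        rw [sum_swap4]
        refine Finset.sum_congr rfl fun q _ => Finset.sum_congr rfl fun r _ => ?_
        rw [Finset.sum_mul]
        exact Finset.sum_congr rfl fun p _ => by rw [Finset.sum_mul]
    _ = ∑ q ∈ range (mm + 1), ∑ r ∈ range (mm + 1), (if q + r = N then Bv q r else 0) := by
        refine Finset.sum_congr rfl fun q hqm => Finset.sum_congr rfl fun r hrm => ?_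
        rw [mem_range] at hqm hrm
        rw [keyIdent mm N q r l κ hκ (by omega) (by omega) hN1 hN2]
        by_cases h : q + r = N <;> simp [h]



lemma collapseN (mm : ℕ) (g : ℕ → ℕ → ℕ → ℂ) :
    ∑ N ∈ range (2 * mm + 1), ∑ p ∈ range (mm + 1), ∑ p' ∈ range (mm + 1),
      (if p + p' = N then g p p' N else 0)
    = ∑ p ∈ range (mm + 1), ∑ p' ∈ range (mm + 1), g p p' (p + p') := by
  rw [Finset.sum_comm]
  refine Finset.sum_congr rfl fun p hp => ?_
  rw [Finset.sum_comm]
  refine Finset.sum_congr rfl fun p' hp' => ?_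
  rw [Finset.sum_ite_eq (range (2 * mm + 1)) (p + p')]
  rw [mem_range] at hp hp'
  rw [if_pos (by rw [mem_range]; omega)]

lemma laurentMain (mm : ℕ) (l κ : ℕ → ℂ) (Bv : ℕ → ℕ → ℂ)
    (hκ : ∀ q' r' : ℕ, q' ≤ mm → r' ≤ mm →
      ∑ p ∈ range (mm + 1 - r'), κ (p + q') * l (p + r') = if q' = r' then 1 else 0)
    (u : ℂ) :
    (∑ p ∈ range (mm + 1), ∑ p' ∈ range (mm + 1),
        2 * (l p' * ssIntAux mm κ Bv p) * u ^ (2 * mm - p - p'))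
      - ∑ q ∈ range (mm + 1), ∑ r ∈ range (mm + 1), Bv q r * u ^ (2 * mm - q - r)
    = u ^ (mm + 1) * ∑ N ∈ range mm, coefC mm l κ Bv N * u ^ (mm - 1 - N) := by
  have key : (∑ p ∈ range (mm + 1), ∑ p' ∈ range (mm + 1),
        2 * (l p' * ssIntAux mm κ Bv p) * u ^ (2 * mm - p - p'))
      - ∑ q ∈ range (mm + 1), ∑ r ∈ range (mm + 1), Bv q r * u ^ (2 * mm - q - r)
      = ∑ N ∈ range (2 * mm + 1), coefC mm l κ Bv N * u ^ (2 * mm - N) := by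
    have e1 : ∑ N ∈ range (2 * mm + 1), coefC mm l κ Bv N * u ^ (2 * mm - N)
        = (∑ N ∈ range (2 * mm + 1), ∑ p ∈ range (mm + 1), ∑ p' ∈ range (mm + 1),
            (if p + p' = N then 2 * (l p' * ssIntAux mm κ Bv p) * u ^ (2 * mm - N) else 0))
          - ∑ N ∈ range (2 * mm + 1), ∑ q ∈ range (mm + 1), ∑ r ∈ range (mm + 1),
            (if q + r = N then Bv q r * u ^ (2 * mm - N) else 0) := by
      rw [← Finset.sum_sub_distrib]
      refine Finset.sum_congr rfl fun N _ => ?_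
      rw [coefC, sub_mul]
      congr 1
      · simp only [Finset.mul_sum, Finset.sum_mul, ite_mul, mul_ite, zero_mul, mul_zero]
      · simp only [Finset.sum_mul, ite_mul, zero_mul]
    rw [e1, collapseN, collapseN]
    simp only [Nat.sub_sub]
  rw [key]
  rw [show range (2 * mm + 1) = range mm ∪ (range (2 * mm + 1) \ range mm) by
    rw [Finset.union_sdiff_of_subset]
    intro x hx; rw [mem_range] at hx ⊢; omega]
  rw [Finset.sum_union (Finset.disjoint_sdiff)]
  have hzero : ∑ N ∈ range (2 * mm + 1) \ range mm, coefC mm l κ Bv N * u ^ (2 * mm - N) = 0 := by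
    refine Finset.sum_eq_zero fun N hN => ?_
    rw [Finset.mem_sdiff, mem_range, mem_range] at hN
    rw [coefC_eq_zero mm N l κ Bv hκ (by omega) (by omega), zero_mul]
  rw [hzero, add_zero, Finset.mul_sum]
  refine Finset.sum_congr rfl fun N hN => ?_
  rw [mem_range] at hN
  rw [show 2 * mm - N = (mm + 1) + (mm - 1 - N) by omega, pow_add]
  ring

end PPQD


namespace PPQD
open Finset

/-- continuity of a finite sum at a point -/
lemma caSum {ι : Type*} (s : Finset ι) {f : ι → ℂ → ℂ} {x : ℂ}
    (h : ∀ i ∈ s, ContinuousAt (f i) x) :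
    ContinuousAt (fun w => ∑ i ∈ s, f i w) x := by
  classical
  induction s using Finset.induction_on with
  | empty => simpa using continuousAt_const
  | @insert i s hni ih =>
    simp only [Finset.sum_insert hni]
    exact (h i (mem_insert_self i s)).add
      (ih fun j hj => h j (mem_insert_of_mem hj))

lemma caPow (c : ℂ) (k : ℕ) (x : ℂ) : ContinuousAt (fun w : ℂ => (w - c) ^ k) x :=
  ((continuous_id.sub continuous_const).pow k).continuousAt

lemma caInvPow {c x : ℂ} (k : ℕ) (hxc : x ≠ c) :
    ContinuousAt (fun w : ℂ => ((w - c) ^ k)⁻¹) x :=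
  (caPow c k x).inv₀ (pow_ne_zero _ (sub_ne_zero.mpr hxc))

noncomputable def gReg {n : ℕ} (z : Fin n → ℂ) (m : Fin n → ℕ) (l : Fin n → ℕ → ℂ)
    (linf : ℂ) (a : Fin n) (w : ℂ) : ℂ :=
  (∑ b ∈ Finset.univ.erase a, ∑ p ∈ range (m b + 1), l b p / (w - z b) ^ (p + 1)) - linf

noncomputable def phisFun {n : ℕ} (z : Fin n → ℂ) (m : Fin n → ℕ) (l : Fin n → ℕ → ℂ)
    (a : Fin n) (w : ℂ) : ℂ :=
  ∑ p ∈ range (m a + 1), l a p / (w - z a) ^ (p + 1)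

noncomputable def psiFun {n : ℕ} (z : Fin n → ℂ) (m : Fin n → ℕ) (l : Fin n → ℕ → ℂ)
    (linf : ℂ) (a : Fin n) (w : ℂ) : ℂ :=
  (∑ p ∈ range (m a + 1), l a p * (w - z a) ^ (m a - p))
    + (w - z a) ^ (m a + 1) * gReg z m l linf a w

noncomputable def gamS {n : ℕ} {V : Type*} [AddCommGroup V] [Module ℂ V]
    (z : Fin n → ℂ) (m : Fin n → ℕ) (v : Fin n → ℕ → V) (a : Fin n) (w : ℂ) : V :=
  ∑ p ∈ range (m a + 1), ((w - z a) ^ (p + 1))⁻¹ • v a p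

noncomputable def hReg {n : ℕ} {V : Type*} [AddCommGroup V] [Module ℂ V]
    (z : Fin n → ℂ) (m : Fin n → ℕ) (v : Fin n → ℕ → V) (a : Fin n) (w : ℂ) : V :=
  ∑ b ∈ Finset.univ.erase a, ∑ p ∈ range (m b + 1), ((w - z b) ^ (p + 1))⁻¹ • v b p

noncomputable def SFun {n : ℕ} {V : Type*} [AddCommGroup V] [Module ℂ V]
    (B : V →ₗ[ℂ] V →ₗ[ℂ] ℂ) (z : Fin n → ℂ) (m : Fin n → ℕ) (κ : Fin n → ℕ → ℂ)
    (v : Fin n → ℕ → V) (a : Fin n) (w : ℂ) : ℂ :=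
  ∑ p ∈ range (m a + 1), ssInt B m κ v a p / (w - z a) ^ (p + 1)

noncomputable def TFun {n : ℕ} {V : Type*} [AddCommGroup V] [Module ℂ V]
    (B : V →ₗ[ℂ] V →ₗ[ℂ] ℂ) (z : Fin n → ℂ) (m : Fin n → ℕ) (κ : Fin n → ℕ → ℂ)
    (v : Fin n → ℕ → V) (a : Fin n) (w : ℂ) : ℂ :=
  ∑ b ∈ Finset.univ.erase a, ∑ p ∈ range (m b + 1), ssInt B m κ v b p / (w - z b) ^ (p + 1)

noncomputable def PSFun {n : ℕ} {V : Type*} [AddCommGroup V] [Module ℂ V]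
    (B : V →ₗ[ℂ] V →ₗ[ℂ] ℂ) (z : Fin n → ℂ) (m : Fin n → ℕ) (κ : Fin n → ℕ → ℂ)
    (v : Fin n → ℕ → V) (a : Fin n) (w : ℂ) : ℂ :=
  ∑ p ∈ range (m a + 1), ssInt B m κ v a p * (w - z a) ^ (m a - p)

noncomputable def HcFun {n : ℕ} {V : Type*} [AddCommGroup V] [Module ℂ V]
    (B : V →ₗ[ℂ] V →ₗ[ℂ] ℂ) (z : Fin n → ℂ) (m : Fin n → ℕ)
    (v : Fin n → ℕ → V) (a : Fin n) (w : ℂ) : ℂ :=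
  ∑ b ∈ Finset.univ.erase a, ∑ q ∈ range (m b + 1),
    ((w - z b) ^ (q + 1))⁻¹
      * ∑ p ∈ range (m a + 1), (w - z a) ^ (m a - p) * B (v a p) (v b q)

noncomputable def HqFun {n : ℕ} {V : Type*} [AddCommGroup V] [Module ℂ V]
    (B : V →ₗ[ℂ] V →ₗ[ℂ] ℂ) (z : Fin n → ℂ) (m : Fin n → ℕ)
    (v : Fin n → ℕ → V) (a : Fin n) (w : ℂ) : ℂ :=
  ∑ b ∈ Finset.univ.erase a, ∑ q ∈ range (m b + 1),
    ((w - z b) ^ (q + 1))⁻¹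
      * ∑ b' ∈ Finset.univ.erase a, ∑ q' ∈ range (m b' + 1),
          ((w - z b') ^ (q' + 1))⁻¹ * B (v b' q') (v b q)

noncomputable def CFun {n : ℕ} {V : Type*} [AddCommGroup V] [Module ℂ V]
    (B : V →ₗ[ℂ] V →ₗ[ℂ] ℂ) (z : Fin n → ℂ) (m : Fin n → ℕ) (l : Fin n → ℕ → ℂ)
    (κ : Fin n → ℕ → ℂ) (v : Fin n → ℕ → V) (a : Fin n) (w : ℂ) : ℂ :=
  ∑ N ∈ range (m a), coefC (m a) (l a) (κ a) (fun q r => B (v a q) (v a r)) N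
    * (w - z a) ^ (m a - 1 - N)

noncomputable def EFun {n : ℕ} {V : Type*} [AddCommGroup V] [Module ℂ V]
    (B : V →ₗ[ℂ] V →ₗ[ℂ] ℂ) (z : Fin n → ℂ) (m : Fin n → ℕ) (l : Fin n → ℕ → ℂ)
    (linf : ℂ) (κ : Fin n → ℕ → ℂ) (v : Fin n → ℕ → V) (a : Fin n) (w : ℂ) : ℂ :=
  (CFun B z m l κ v a w
      + (2 * gReg z m l linf a w * PSFun B z m κ v a w
        - (2 * HcFun B z m v a w + (w - z a) ^ (m a + 1) * HqFun B z m v a w)))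
    / (2 * psiFun z m l linf a w) + TFun B z m κ v a w

end PPQD

set_option maxHeartbeats 2000000

/-- **Principal part of the quadratic density** (Proposition A.2, pointwise/bilinear-form
version).  The scalar rational function `Q(z) = -B(Γ(z), Γ(z))/(2 φ(z))` satisfies
`Q(z) = -Σ_α Σ_p D^α_p (z - z_α)^{-(p+1)} + Q_reg(z)` with `Q_reg` holomorphic at every `z_α`;
i.e. `Q(z) + Σ_α Σ_p D^α_p (z - z_α)^{-(p+1)}` has a (finite) limit at each `z_α`. -/
theorem principal_part_of_quadratic_density
    {n : ℕ} {V : Type*} [AddCommGroup V] [Module ℂ V]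
    (B : V →ₗ[ℂ] V →ₗ[ℂ] ℂ) (hB : ∀ x y, B x y = B y x)
    (z : Fin n → ℂ) (m : Fin n → ℕ) (l : Fin n → ℕ → ℂ)
    (linf : ℂ)
    (hz : Function.Injective z)
    (hl : ∀ a, l a (m a) ≠ 0)
    -- the coefficients `κ^α_p`, characterised by the linear system (2.8) of the paper
    (κ : Fin n → ℕ → ℂ)
    (hκ : ∀ a, ∀ q r : ℕ, q ≤ m a → r ≤ m a →
      ∑ p ∈ Finset.range (m a + 1 - r), κ a (p + q) * l a (p + r)
        = if q = r then 1 else 0)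
    (v : Fin n → ℕ → V) :
    ∀ a : Fin n, ∃ c : ℂ,
      Filter.Tendsto
        (fun w =>
          -(B (gamFun z m v w) (gamFun z m v w)) / (2 * (chiFun z m l w - linf))
            + ∑ b, ∑ p ∈ Finset.range (m b + 1),
                ssInt B m κ v b p / (w - z b) ^ (p + 1))
        (𝓝[≠] (z a)) (𝓝 c) := by
  classical
  intro a
  open PPQD Finset in
  have hza : ∀ b : Fin n, b ≠ a → z a ≠ z b := fun b hb e => hb (hz e.symm)
  -- value of ψ at z a
  have hψval : psiFun z m l linf a (z a) = l a (m a) := by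
    rw [psiFun, sub_self, zero_pow (Nat.succ_ne_zero _), zero_mul, add_zero]
    rw [Finset.sum_eq_single_of_mem (m a) (Finset.self_mem_range_succ (m a))
      (fun p hp hne => by
        rw [Finset.mem_range] at hp
        rw [zero_pow (by omega : m a - p ≠ 0), mul_zero])]
    rw [Nat.sub_self, pow_zero, mul_one]
  -- continuity of ψ at z a
  have hgcont : ContinuousAt (gReg z m l linf a) (z a) := by
    refine ContinuousAt.sub (caSum _ fun b hb => caSum _ fun p _ => ?_) continuousAt_const
    exact continuousAt_const.div (caPow (z b) (p + 1) (z a))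
      (pow_ne_zero _ (sub_ne_zero.mpr (hza b (Finset.ne_of_mem_erase hb))))
  have hψcont : ContinuousAt (psiFun z m l linf a) (z a) := by
    refine ContinuousAt.add (caSum _ fun p _ => continuousAt_const.mul (caPow _ _ _)) ?_
    exact (caPow _ _ _).mul hgcont
  -- continuity of the candidate limit function at z a
  have hne' : ∀ b ∈ Finset.univ.erase a, z a ≠ z b :=
    fun b hb => hza b (Finset.ne_of_mem_erase hb)
  have hEcont : ContinuousAt (EFun B z m l linf κ v a) (z a) := by
    refine ContinuousAt.add (ContinuousAt.div ?_ (continuousAt_const.mul hψcont) ?_) ?_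
    · refine ContinuousAt.add (caSum _ fun N _ => continuousAt_const.mul (caPow _ _ _)) ?_
      refine ContinuousAt.sub ((continuousAt_const.mul hgcont).mul
        (caSum _ fun p _ => continuousAt_const.mul (caPow _ _ _))) ?_
      refine ContinuousAt.add (continuousAt_const.mul ?_) ((caPow _ _ _).mul ?_)
      · exact caSum _ fun b hb => caSum _ fun q _ =>
          (caInvPow _ (hne' b hb)).mul
            (caSum _ fun p _ => (caPow _ _ _).mul continuousAt_const)
      · exact caSum _ fun b hb => caSum _ fun q _ =>
          (caInvPow _ (hne' b hb)).mul
            (caSum _ fun b' hb' => caSum _ fun q' _ =>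
              (caInvPow _ (hne' b' hb')).mul continuousAt_const)
    · rw [hψval]
      simp only [ne_eq, mul_eq_zero, not_or]
      exact ⟨two_ne_zero, hl a⟩
    · exact caSum _ fun b hb => caSum _ fun p _ =>
        continuousAt_const.div (caPow _ _ _)
          (pow_ne_zero _ (sub_ne_zero.mpr (hne' b hb)))
  -- the main pointwise identity
  have main_eq : ∀ w : ℂ, w - z a ≠ 0 → (∀ b ∈ Finset.univ.erase a, w - z b ≠ 0) →
      psiFun z m l linf a w ≠ 0 →
      -(B (gamFun z m v w) (gamFun z m v w)) / (2 * (chiFun z m l w - linf))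
        + ∑ b, ∑ p ∈ Finset.range (m b + 1), ssInt B m κ v b p / (w - z b) ^ (p + 1)
      = EFun B z m l linf κ v a w := by
    intro w hu hub hψ
    have hupow : ∀ k : ℕ, (w - z a) ^ k ≠ 0 := fun k => pow_ne_zero k hu
    -- generic cancellation
    have hkey : ∀ (X : ℂ) (p : ℕ), p ≤ m a →
        (w - z a) ^ (m a + 1) * (((w - z a) ^ (p + 1))⁻¹ * X)
          = (w - z a) ^ (m a - p) * X := by
      intro X p hp
      rw [show m a + 1 = (m a - p) + (p + 1) by omega, pow_add, mul_assoc,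
        ← mul_assoc ((w - z a) ^ (p + 1)), mul_inv_cancel₀ (hupow (p + 1)), one_mul]
    have hchi : chiFun z m l w - linf
        = phisFun z m l a w + gReg z m l linf a w := by
      rw [chiFun, ← Finset.add_sum_erase _ _ (Finset.mem_univ a), phisFun, gReg]
      ring
    have hgam : gamFun z m v w = gamS z m v a w + hReg z m v a w :=
      (Finset.add_sum_erase _ _ (Finset.mem_univ a)).symm
    have hgoalsum : (∑ b, ∑ p ∈ Finset.range (m b + 1),
          ssInt B m κ v b p / (w - z b) ^ (p + 1))
        = SFun B z m κ v a w + TFun B z m κ v a w :=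
      (Finset.add_sum_erase _ _ (Finset.mem_univ a)).symm
    have hψeq : psiFun z m l linf a w
        = (w - z a) ^ (m a + 1) * (phisFun z m l a w + gReg z m l linf a w) := by
      rw [psiFun, phisFun, mul_add, Finset.mul_sum]
      congr 1
      refine Finset.sum_congr rfl fun p hp => ?_
      rw [Finset.mem_range] at hp
      rw [div_eq_mul_inv]
      linear_combination (-1 : ℂ) * hkey (l a p) p (by omega)
    have hφ : phisFun z m l a w + gReg z m l linf a w ≠ 0 := fun h0 => hψ (by
      rw [hψeq, h0, mul_zero])
    have hBexp : B (gamFun z m v w) (gamFun z m v w)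
        = B (gamS z m v a w) (gamS z m v a w)
          + 2 * B (gamS z m v a w) (hReg z m v a w)
          + B (hReg z m v a w) (hReg z m v a w) := by
      rw [hgam]
      simp only [map_add, LinearMap.add_apply]
      rw [hB (hReg z m v a w) (gamS z m v a w)]
      ring
    have hBss : (w - z a) ^ (2 * m a + 2)
          * B (gamS z m v a w) (gamS z m v a w)
        = ∑ q ∈ Finset.range (m a + 1), ∑ r ∈ Finset.range (m a + 1),
            B (v a q) (v a r) * (w - z a) ^ (2 * m a - q - r) := by
      calc (w - z a) ^ (2 * m a + 2) * B (gamS z m v a w) (gamS z m v a w)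
          = ∑ q ∈ Finset.range (m a + 1), ∑ r ∈ Finset.range (m a + 1),
              B (v a r) (v a q) * (w - z a) ^ (2 * m a - r - q) := by
            simp only [gamS, map_sum, LinearMap.sum_apply, map_smul,
              LinearMap.smul_apply, smul_eq_mul, Finset.mul_sum]
            refine Finset.sum_congr rfl fun q hq => ?_
            refine Finset.sum_congr rfl fun r hr => ?_
            rw [Finset.mem_range] at hq hr
            rw [show 2 * m a + 2 = (2 * m a - r - q) + (q + 1) + (r + 1) by omega,
              pow_add, pow_add]
            field_simp
        _ = _ := Finset.sum_comm
    have hφsS : (w - z a) ^ (2 * m a + 2)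
          * (2 * phisFun z m l a w * SFun B z m κ v a w)
        = ∑ p ∈ Finset.range (m a + 1), ∑ p' ∈ Finset.range (m a + 1),
            2 * (l a p' * ssInt B m κ v a p) * (w - z a) ^ (2 * m a - p - p') := by
      have e : phisFun z m l a w * SFun B z m κ v a w
          = ∑ p ∈ Finset.range (m a + 1), ∑ p' ∈ Finset.range (m a + 1),
              (ssInt B m κ v a p / (w - z a) ^ (p + 1))
                * (l a p' / (w - z a) ^ (p' + 1)) := by
        rw [phisFun, SFun, mul_comm, Finset.sum_mul_sum]
      rw [show (w - z a) ^ (2 * m a + 2) * (2 * phisFun z m l a w * SFun B z m κ v a w)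
          = 2 * ((w - z a) ^ (2 * m a + 2) * (phisFun z m l a w * SFun B z m κ v a w))
          by ring, e, Finset.mul_sum, Finset.mul_sum]
      refine Finset.sum_congr rfl fun p hp => ?_
      rw [Finset.mul_sum, Finset.mul_sum]
      refine Finset.sum_congr rfl fun p' hp' => ?_
      rw [Finset.mem_range] at hp hp'
      rw [show 2 * m a + 2 = (2 * m a - p - p') + (p + 1) + (p' + 1) by omega,
        pow_add, pow_add]
      field_simp
    have hCw : (w - z a) ^ (m a + 1)
          * (2 * phisFun z m l a w * SFun B z m κ v a w
            - B (gamS z m v a w) (gamS z m v a w))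
        = CFun B z m l κ v a w := by
      apply mul_left_cancel₀ (hupow (m a + 1))
      have hlm := laurentMain (m a) (l a) (κ a) (fun q r => B (v a q) (v a r)) (hκ a)
        (w - z a)
      have hssAux : ∀ p, ssIntAux (m a) (κ a) (fun q r => B (v a q) (v a r)) p
          = ssInt B m κ v a p := fun p => rfl
      simp only [hssAux] at hlm
      calc (w - z a) ^ (m a + 1) * ((w - z a) ^ (m a + 1)
            * (2 * phisFun z m l a w * SFun B z m κ v a w
              - B (gamS z m v a w) (gamS z m v a w)))
          = (w - z a) ^ (2 * m a + 2)
              * (2 * phisFun z m l a w * SFun B z m κ v a w)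
            - (w - z a) ^ (2 * m a + 2)
              * B (gamS z m v a w) (gamS z m v a w) := by
            rw [← mul_assoc, ← pow_add, show m a + 1 + (m a + 1) = 2 * m a + 2 by ring,
              mul_sub]
        _ = (w - z a) ^ (m a + 1) * CFun B z m l κ v a w := by
            rw [hφsS, hBss, hlm, CFun]
    have hPS : (w - z a) ^ (m a + 1) * SFun B z m κ v a w = PSFun B z m κ v a w := by
      rw [SFun, PSFun, Finset.mul_sum]
      refine Finset.sum_congr rfl fun p hp => ?_
      rw [Finset.mem_range] at hp
      rw [div_eq_mul_inv]
      linear_combination hkey (ssInt B m κ v a p) p (by omega)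
    have hHc : (w - z a) ^ (m a + 1) * B (gamS z m v a w) (hReg z m v a w)
        = HcFun B z m v a w := by
      simp only [gamS, hReg, map_sum, LinearMap.sum_apply, map_smul,
        LinearMap.smul_apply, smul_eq_mul, HcFun, Finset.mul_sum]
      refine Finset.sum_congr rfl fun b hb => ?_
      refine Finset.sum_congr rfl fun q hq => ?_
      refine Finset.sum_congr rfl fun p hp => ?_
      rw [Finset.mem_range] at hp
      linear_combination ((w - z b) ^ (q + 1))⁻¹ * hkey (B (v a p) (v b q)) p (by omega)
    have hBhh : B (hReg z m v a w) (hReg z m v a w) = HqFun B z m v a w := by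
      simp only [hReg, HqFun, map_sum, LinearMap.sum_apply, map_smul,
        LinearMap.smul_apply, smul_eq_mul]
    -- assemble
    rw [hgoalsum, hchi, hBexp]
    have h2φ : 2 * (phisFun z m l a w + gReg z m l linf a w) ≠ 0 :=
      mul_ne_zero two_ne_zero hφ
    have hden : 2 * psiFun z m l linf a w
        = (w - z a) ^ (m a + 1)
          * (2 * (phisFun z m l a w + gReg z m l linf a w)) := by
      rw [hψeq]; ring
    have hnum : CFun B z m l κ v a w
          + (2 * gReg z m l linf a w * PSFun B z m κ v a w
            - (2 * HcFun B z m v a w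
              + (w - z a) ^ (m a + 1) * HqFun B z m v a w))
        = (w - z a) ^ (m a + 1)
          * (2 * (phisFun z m l a w + gReg z m l linf a w) * SFun B z m κ v a w
            - (B (gamS z m v a w) (gamS z m v a w)
              + 2 * B (gamS z m v a w) (hReg z m v a w)
              + B (hReg z m v a w) (hReg z m v a w))) := by
      linear_combination (-1 : ℂ) * hCw - 2 * gReg z m l linf a w * hPS + 2 * hHc
        + (w - z a) ^ (m a + 1) * hBhh
    have hmain2 : -(B (gamS z m v a w) (gamS z m v a w)
          + 2 * B (gamS z m v a w) (hReg z m v a w)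
          + B (hReg z m v a w) (hReg z m v a w))
          / (2 * (phisFun z m l a w + gReg z m l linf a w)) + SFun B z m κ v a w
        = (CFun B z m l κ v a w
            + (2 * gReg z m l linf a w * PSFun B z m κ v a w
              - (2 * HcFun B z m v a w
                + (w - z a) ^ (m a + 1) * HqFun B z m v a w)))
          / (2 * psiFun z m l linf a w) := by
      rw [hnum, hden, mul_div_mul_left _ _ (hupow (m a + 1))]
      field_simp
      ring
    rw [EFun]
    linear_combination hmain2
  -- eventual equality
  have ev1 : ∀ᶠ w in 𝓝[≠] (z a), w ≠ z a := by
    have := self_mem_nhdsWithin (a := z a) (s := {z a}ᶜ)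
    exact Filter.eventually_iff_exists_mem.mpr ⟨_, this, fun w hw => hw⟩
  have ev2 : ∀ᶠ w in 𝓝[≠] (z a), ∀ b ∈ Finset.univ.erase a, w ≠ z b := by
    rw [Filter.eventually_all_finset]
    intro b hb
    exact eventually_ne_nhdsWithin (hza b (Finset.ne_of_mem_erase hb))
  have ev3 : ∀ᶠ w in 𝓝[≠] (z a), psiFun z m l linf a w ≠ 0 :=
    Filter.Eventually.filter_mono nhdsWithin_le_nhds
      (hψcont.eventually_ne (by rw [hψval]; exact hl a))
  refine ⟨EFun B z m l linf κ v a (z a), Filter.Tendsto.congr' ?_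
    (hEcont.tendsto.mono_left nhdsWithin_le_nhds)⟩
  filter_upwards [ev1, ev2, ev3] with w h1 h2 h3
  exact (main_eq w (sub_ne_zero.mpr h1) (fun b hb => sub_ne_zero.mpr (h2 b hb)) h3).symm
end

section
/- Reality of the coupled zeros (Lemma C.4). Assume in addition that ℓ^∞ is real and that χ_1 and χ_2 are conjugation-equivariant, i.e. χ_k(conj(z)) = conj(χ_k(z)) for all z (equivalently, the collection of poles with their levels is invariant under complex conjugation), so that conj(φ_γ(z)) = φ_γ(conj(z)) for real γ. Let i ∈ {1, …, M} and let k = 1 if i ≤ M_1 and k = 2 otherwise, and suppose the zero ζ^{(k)}_i is real. Then for all sufficiently small real γ ≠ 0, the corresponding zero ζ_i(γ) of the coupled twist function φ_γ is real; moreover, for all sufficiently small real γ ≠ 0, φ_γ'(ζ_i(γ)) is a nonzero real number with the same sign as φ_k'(ζ^{(k)}_i). -/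
open scoped BigOperators Topology ComplexConjugate
open Filter

noncomputable def chiDeriv {n : ℕ} (z : Fin n → ℂ) (m : Fin n → ℕ)
    (l : Fin n → ℕ → ℂ) (w : ℂ) : ℂ :=
  ∑ a, ∑ p ∈ Finset.range (m a + 1), (-(p+1) : ℂ) * l a p / (w - z a) ^ (p + 2)

lemma hasDerivAt_chiFun {n : ℕ} (z : Fin n → ℂ) (m : Fin n → ℕ)
    (l : Fin n → ℕ → ℂ) {w : ℂ} (hw : ∀ a, w ≠ z a) :
    HasDerivAt (chiFun z m l) (chiDeriv z m l w) w := by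
  unfold chiFun chiDeriv
  apply HasDerivAt.fun_sum
  intro a _
  apply HasDerivAt.fun_sum
  intro p _
  have hwz : w - z a ≠ 0 := sub_ne_zero.mpr (hw a)
  have hpow : HasDerivAt (fun x : ℂ => (x - z a) ^ (p + 1))
      (((p+1 : ℕ) : ℂ) * (w - z a) ^ p * 1) w := by
    simpa using ((hasDerivAt_id w).sub_const (z a)).fun_pow (p+1)
  have h := (hasDerivAt_const w (l a p)).fun_div hpow (pow_ne_zero _ hwz)
  refine h.congr_deriv ?_
  field_simp
  push_cast
  ring

lemma hasDerivAt_conj_conj {f : ℂ → ℂ} {d x : ℂ} (h : HasDerivAt f d x) :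
    HasDerivAt (fun z => conj (f (conj z))) (conj d) (conj x) := by
  rw [hasDerivAt_iff_isLittleO] at h ⊢
  have hconj : Filter.Tendsto (fun z : ℂ => (conj z : ℂ)) (𝓝 (conj x)) (𝓝 x) := by
    simpa using (Complex.continuous_conj.tendsto (conj x))
  have h3 : (fun z : ℂ => f (conj z) - f x - (conj z - x) • d)
      =o[𝓝 (conj x)] (fun z : ℂ => conj z - x) := h.comp_tendsto hconj
  have e1 : ∀ z : ℂ, conj (f (conj z)) - conj (f (conj (conj x))) - (z - conj x) • conj d
      = conj (f (conj z) - f x - (conj z - x) • d) := by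
    intro z
    simp [smul_eq_mul, map_sub, map_mul, Complex.conj_conj]
  rw [← Asymptotics.isLittleO_norm_norm]
  have e2 : (fun z : ℂ => ‖conj (f (conj z)) - conj (f (conj (conj x))) - (z - conj x) • conj d‖)
      = fun z : ℂ => ‖f (conj z) - f x - (conj z - x) • d‖ :=
    funext fun z => by rw [e1 z, RCLike.norm_conj]
  have e3 : (fun z : ℂ => ‖z - conj x‖) = fun z : ℂ => ‖conj z - x‖ :=
    funext fun z => by rw [show z - conj x = conj (conj z - x) by simp, RCLike.norm_conj]
  rw [e2, e3]
  exact Asymptotics.isLittleO_norm_norm.mpr h3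

lemma conj_deriv_of_equivariant {f : ℂ → ℂ} {x d : ℂ}
    (hf : ∀ w, f (conj w) = conj (f w)) (hx : conj x = x)
    (h : HasDerivAt f d x) : conj d = d := by
  have h2 : HasDerivAt (fun z => conj (f (conj z))) (conj d) (conj x) := hasDerivAt_conj_conj h
  have h3 : HasDerivAt f (conj d) x := by
    rw [hx] at h2
    refine h2.congr_of_eventuallyEq (Filter.Eventually.of_forall fun z => ?_)
    show f z = conj (f (conj z))
    rw [hf z, Complex.conj_conj]
  exact h3.unique h

lemma chiDeriv_far {n : ℕ} (z : Fin n → ℂ) (m : Fin n → ℕ) (l : Fin n → ℕ → ℂ)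
    {δ : ℝ} (hδ : 0 < δ) :
    ∃ R : ℝ, 0 < R ∧ ∀ u : ℂ, R ≤ ‖u‖ →
      (∀ a, u ≠ z a) ∧ ‖chiDeriv z m l u‖ ≤ δ := by
  obtain ⟨Z0, hZ0⟩ := Finite.exists_le fun a => ‖z a‖
  set Z := max Z0 0 with hZdef
  have hZ : ∀ a, ‖z a‖ ≤ Z := fun a => le_trans (hZ0 a) (le_max_left _ _)
  have hZnn : 0 ≤ Z := le_max_right _ _
  set K := ∑ a, ∑ p ∈ Finset.range (m a + 1), (((p:ℝ)+1) * ‖l a p‖) with hKdef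
  have hK : 0 ≤ K := by
    apply Finset.sum_nonneg; intro a _
    apply Finset.sum_nonneg; intro p _
    positivity
  refine ⟨max (2*Z+2) (2*K/δ + 1), lt_max_of_lt_left (by linarith), fun u hu => ?_⟩
  have hu1 : 2*Z + 2 ≤ ‖u‖ := le_trans (le_max_left _ _) hu
  have hu2 : 2*K/δ + 1 ≤ ‖u‖ := le_trans (le_max_right _ _) hu
  have hupos : 0 < ‖u‖ := by linarith
  have hnp : ∀ a, u ≠ z a := by
    intro a h
    have := hZ a
    rw [h] at hu1
    linarith
  refine ⟨hnp, ?_⟩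
  have hsub : ∀ a, ‖u‖/2 ≤ ‖u - z a‖ := by
    intro a
    have h1 : ‖u‖ - ‖z a‖ ≤ ‖u - z a‖ := norm_sub_norm_le u (z a)
    have := hZ a
    linarith
  have hterm : ∀ a, ∀ p ∈ Finset.range (m a + 1),
      ‖(-(p+1) : ℂ) * l a p / (u - z a) ^ (p + 2)‖ ≤ (((p:ℝ)+1) * ‖l a p‖) / (‖u‖/2) := by
    intro a p _
    have h1 : ‖u‖/2 ≤ ‖u - z a‖ ^ (p+2) := by
      refine le_trans (hsub a) (le_self_pow₀ ?_ (by omega))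
      have := hsub a; linarith
    have hc : ‖(-(p+1) : ℂ)‖ = (p:ℝ)+1 := by
      rw [norm_neg, show ((p:ℂ)+1) = ((p+1 : ℕ) : ℂ) by push_cast; ring,
        Complex.norm_natCast]
      push_cast; ring
    rw [norm_div, norm_mul, norm_pow, hc]
    exact div_le_div_of_nonneg_left (by positivity) (by linarith) h1
  calc ‖chiDeriv z m l u‖
      ≤ ∑ a, ∑ p ∈ Finset.range (m a + 1),
          ‖(-(p+1) : ℂ) * l a p / (u - z a) ^ (p + 2)‖ :=
        le_trans (norm_sum_le _ _) (Finset.sum_le_sum fun a _ => norm_sum_le _ _)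
    _ ≤ ∑ a, ∑ p ∈ Finset.range (m a + 1), (((p:ℝ)+1) * ‖l a p‖) / (‖u‖/2) :=
        Finset.sum_le_sum fun a _ => Finset.sum_le_sum fun p hp => hterm a p hp
    _ = K / (‖u‖/2) := by
        rw [hKdef, Finset.sum_div]
        exact Finset.sum_congr rfl fun a _ => by rw [Finset.sum_div]
    _ ≤ δ := by
        rw [div_le_iff₀ (by linarith)]
        have hd2 : δ * (2*K/δ) = 2*K := by field_simp
        nlinarith [mul_le_mul_of_nonneg_left hu2 (le_of_lt hδ)]

lemma chiDeriv_cont {n : ℕ} (z : Fin n → ℂ) (m : Fin n → ℕ) (l : Fin n → ℕ → ℂ)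
    {w0 : ℂ} (hw0 : ∀ a, w0 ≠ z a) {δ : ℝ} (hδ : 0 < δ) :
    ∃ r : ℝ, 0 < r ∧ ∀ w ∈ Metric.ball w0 r,
      (∀ a, w ≠ z a) ∧ ‖chiDeriv z m l w - chiDeriv z m l w0‖ ≤ δ := by
  have hcont : ContinuousAt (chiDeriv z m l) w0 := by
    unfold chiDeriv
    apply tendsto_finset_sum
    intro a _
    apply tendsto_finset_sum
    intro p _
    exact ContinuousAt.div continuousAt_const
      ((continuousAt_id.sub continuousAt_const).pow _)
      (pow_ne_zero _ (sub_ne_zero.mpr (hw0 a)))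
  rw [Metric.continuousAt_iff] at hcont
  obtain ⟨r1, hr1, hball⟩ := hcont δ hδ
  have hU : IsOpen (⋂ a, {w : ℂ | w ≠ z a}) := isOpen_iInter_of_finite fun a => isOpen_ne
  have hw0U : w0 ∈ ⋂ a, {w : ℂ | w ≠ z a} := Set.mem_iInter.mpr hw0
  obtain ⟨r2, hr2, hsub⟩ := Metric.isOpen_iff.mp hU w0 hw0U
  refine ⟨min r1 r2, lt_min hr1 hr2, fun w hw => ?_⟩
  rw [Metric.mem_ball] at hw
  constructor
  · exact Set.mem_iInter.mp (hsub (Metric.mem_ball.mpr (lt_of_lt_of_le hw (min_le_right _ _))))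
  · have := hball (lt_of_lt_of_le hw (min_le_left _ _))
    rw [dist_eq_norm] at this
    exact le_of_lt this

lemma zero_unique {F DF : ℂ → ℂ} {d : ℂ} (hd : d ≠ 0) {s : Set ℂ} (hs : Convex ℝ s)
    (hF : ∀ w ∈ s, HasDerivAt F (DF w) w) (hDF : ∀ w ∈ s, ‖DF w - d‖ ≤ ‖d‖ / 2)
    {x y : ℂ} (hx : x ∈ s) (hy : y ∈ s) (hFx : F x = 0) (hFy : F y = 0) : x = y := by
  have key : ∀ w ∈ s, HasDerivWithinAt (fun w => F w - d * w) (DF w - d) s w := by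
    intro w hw
    have := (hF w hw).sub ((hasDerivAt_id w).const_mul d)
    exact (by simpa using this.hasDerivWithinAt : HasDerivWithinAt (F - fun y => d * y) (DF w - d) s w)
  have h2 := Convex.norm_image_sub_le_of_norm_hasDerivWithin_le key hDF hs hx hy
  have h3 : (F y - d * y) - (F x - d * x) = d * (x - y) := by rw [hFx, hFy]; ring
  rw [h3, norm_mul, norm_sub_rev y x] at h2
  have hdpos : 0 < ‖d‖ := norm_pos_iff.mpr hd
  have : ‖x - y‖ = 0 := by nlinarith [norm_nonneg (x - y)]
  exact sub_eq_zero.mp (norm_eq_zero.mp this)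

lemma case_main {n₁ n₂ : ℕ} (z1 : Fin n₁ → ℂ) (m1 : Fin n₁ → ℕ) (l1 : Fin n₁ → ℕ → ℂ)
    (z2 : Fin n₂ → ℂ) (m2 : Fin n₂ → ℕ) (l2 : Fin n₂ → ℕ → ℂ)
    (linf : ℂ) (hlinfR : conj linf = linf)
    (hc1 : ∀ w : ℂ, chiFun z1 m1 l1 (conj w) = conj (chiFun z1 m1 l1 w))
    (hc2 : ∀ w : ℂ, chiFun z2 m2 l2 (conj w) = conj (chiFun z2 m2 l2 w))
    (ζ0 : ℂ) (hζ0im : ζ0.im = 0) (hζ0p : ∀ a, ζ0 ≠ z1 a)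
    (hds : deriv (fun w => chiFun z1 m1 l1 w - linf) ζ0 ≠ 0)
    (C : ℝ) (hC : 0 < C) :
    ∃ ε' : ℝ, 0 < ε' ∧ ∀ γ : ℝ, 0 < |γ| → |γ| < ε' → ∀ c c' : ℂ,
      conj c = c → conj c' = c' → ‖c - c'‖ * |γ| = 1 →
      ∀ x : ℂ, ‖x - c - ζ0‖ ≤ C * |γ| →
      chiFun z1 m1 l1 (x - c) + chiFun z2 m2 l2 (x - c') - linf = 0 →
      x.im = 0 ∧
      HasDerivAt (fun w => chiFun z1 m1 l1 (w - c) + chiFun z2 m2 l2 (w - c') - linf)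
        (chiDeriv z1 m1 l1 (x - c) + chiDeriv z2 m2 l2 (x - c')) x ∧
      (chiDeriv z1 m1 l1 (x - c) + chiDeriv z2 m2 l2 (x - c')).im = 0 ∧
      0 < (chiDeriv z1 m1 l1 (x - c) + chiDeriv z2 m2 l2 (x - c')).re
          * (deriv (fun w => chiFun z1 m1 l1 w - linf) ζ0).re := by
  have hder0 : HasDerivAt (fun w => chiFun z1 m1 l1 w - linf) (chiDeriv z1 m1 l1 ζ0) ζ0 :=
    (hasDerivAt_chiFun z1 m1 l1 hζ0p).sub_const linf
  set d := chiDeriv z1 m1 l1 ζ0 with hddef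
  have hdval : deriv (fun w => chiFun z1 m1 l1 w - linf) ζ0 = d := hder0.deriv
  have hd : d ≠ 0 := hdval ▸ hds
  have hζ0R : conj ζ0 = ζ0 := Complex.conj_eq_iff_im.mpr hζ0im
  have hdR : conj d = d := by
    refine conj_deriv_of_equivariant (f := fun w => chiFun z1 m1 l1 w - linf)
      (fun w => ?_) hζ0R hder0
    show chiFun z1 m1 l1 (conj w) - linf = conj (chiFun z1 m1 l1 w - linf)
    rw [hc1 w, map_sub, hlinfR]
  have hdnorm : 0 < ‖d‖ := norm_pos_iff.mpr hd
  have hδ : 0 < ‖d‖/4 := by linarith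
  obtain ⟨r, hr, hloc⟩ := chiDeriv_cont z1 m1 l1 hζ0p hδ
  obtain ⟨R, hR, hfar⟩ := chiDeriv_far z2 m2 l2 hδ
  have hS : 0 < R + ‖ζ0‖ + r := by positivity
  refine ⟨min (r/(C+1)) (1/(R + ‖ζ0‖ + r)), lt_min (by positivity) (by positivity),
    fun γ hγ0 hγ c c' hcR hc'R hdist x hxc hFx => ?_⟩
  have hrC : C * |γ| < r := by
    have h6 : |γ| < r/(C+1) := lt_of_lt_of_le hγ (min_le_left _ _)
    have h7 := mul_lt_mul_of_pos_left h6 hC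
    have h8 : C * (r/(C+1)) < r := by
      rw [mul_div_assoc'] at *
      rw [div_lt_iff₀ (by linarith)]
      nlinarith
    linarith
  have hγinv : R + ‖ζ0‖ + r < ‖c - c'‖ := by
    have h6 : |γ| < 1/(R + ‖ζ0‖ + r) := lt_of_lt_of_le hγ (min_le_right _ _)
    have h7 := mul_lt_mul_of_pos_right h6 hS
    have hid : (1/(R + ‖ζ0‖ + r)) * (R + ‖ζ0‖ + r) = 1 := by field_simp
    have h9 : |γ| * (R + ‖ζ0‖ + r) < 1 := by linarith
    nlinarith [hdist]
  have hmem : ∀ w : ℂ, w ∈ Metric.ball (ζ0 + c) r ↔ w - c ∈ Metric.ball ζ0 r := by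
    intro w
    rw [Metric.mem_ball, Metric.mem_ball, dist_eq_norm, dist_eq_norm,
      show w - (ζ0 + c) = w - c - ζ0 from by ring]
  have hkey : ∀ w ∈ Metric.ball (ζ0 + c) r,
      HasDerivAt (fun w => chiFun z1 m1 l1 (w - c) + chiFun z2 m2 l2 (w - c') - linf)
        (chiDeriv z1 m1 l1 (w - c) + chiDeriv z2 m2 l2 (w - c')) w ∧
      ‖(chiDeriv z1 m1 l1 (w - c) + chiDeriv z2 m2 l2 (w - c')) - d‖ ≤ ‖d‖/2 := by
    intro w hw
    rw [hmem] at hw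
    obtain ⟨hnp1, hb1⟩ := hloc _ hw
    have hwc : ‖w - c‖ < ‖ζ0‖ + r := by
      have h10 : ‖w - c - ζ0‖ < r := by rw [← dist_eq_norm]; exact hw
      calc ‖w - c‖ = ‖(w - c - ζ0) + ζ0‖ := by ring_nf
        _ ≤ ‖w - c - ζ0‖ + ‖ζ0‖ := norm_add_le _ _
        _ < ‖ζ0‖ + r := by linarith
    have hfarpt : R ≤ ‖w - c'‖ := by
      have h9 : ‖c - c'‖ ≤ ‖w - c'‖ + ‖w - c‖ := by
        calc ‖c - c'‖ = ‖(w - c') - (w - c)‖ := by ring_nf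
          _ ≤ ‖w - c'‖ + ‖w - c‖ := norm_sub_le _ _
      linarith
    obtain ⟨hnp2, hb2⟩ := hfar _ hfarpt
    constructor
    · have h1 : HasDerivAt (fun w => chiFun z1 m1 l1 (w - c)) (chiDeriv z1 m1 l1 (w - c)) w := by
        have := (hasDerivAt_chiFun z1 m1 l1 hnp1).comp w ((hasDerivAt_id w).sub_const c)
        simpa [Function.comp_def] using this
      have h2 : HasDerivAt (fun w => chiFun z2 m2 l2 (w - c')) (chiDeriv z2 m2 l2 (w - c')) w := by
        have := (hasDerivAt_chiFun z2 m2 l2 hnp2).comp w ((hasDerivAt_id w).sub_const c')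
        simpa [Function.comp_def] using this
      exact (h1.add h2).sub_const linf
    · have h11 := norm_add_le (chiDeriv z1 m1 l1 (w - c) - d) (chiDeriv z2 m2 l2 (w - c'))
      rw [show (chiDeriv z1 m1 l1 (w - c) - d) + chiDeriv z2 m2 l2 (w - c')
          = (chiDeriv z1 m1 l1 (w - c) + chiDeriv z2 m2 l2 (w - c')) - d from by ring] at h11
      have hb1' : ‖chiDeriv z1 m1 l1 (w - c) - d‖ ≤ ‖d‖/4 := hb1
      linarith
  have hx' : x ∈ Metric.ball (ζ0 + c) r := by
    rw [hmem, Metric.mem_ball, dist_eq_norm]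
    exact lt_of_le_of_lt hxc hrC
  have hFeq : ∀ w : ℂ, chiFun z1 m1 l1 (conj w - c) + chiFun z2 m2 l2 (conj w - c') - linf
      = conj (chiFun z1 m1 l1 (w - c) + chiFun z2 m2 l2 (w - c') - linf) := by
    intro w
    rw [show conj w - c = conj (w - c) from by rw [map_sub, hcR],
      show conj w - c' = conj (w - c') from by rw [map_sub, hc'R], hc1, hc2,
      map_sub, map_add, hlinfR]
  have hconjx : conj x ∈ Metric.ball (ζ0 + c) r := by
    rw [hmem, Metric.mem_ball, dist_eq_norm,
      show conj x - c - ζ0 = conj (x - c - ζ0) from by rw [map_sub, map_sub, hcR, hζ0R],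
      RCLike.norm_conj]
    exact lt_of_le_of_lt hxc hrC
  have hFconjx : chiFun z1 m1 l1 (conj x - c) + chiFun z2 m2 l2 (conj x - c') - linf = 0 := by
    rw [hFeq x, hFx, map_zero]
  have hxeq : conj x = x :=
    zero_unique hd (convex_ball _ _) (fun w hw => (hkey w hw).1) (fun w hw => (hkey w hw).2)
      hconjx hx' hFconjx hFx
  obtain ⟨hDx, hbound⟩ := hkey x hx'
  have hFeq' : ∀ w : ℂ, (fun w => chiFun z1 m1 l1 (w - c) + chiFun z2 m2 l2 (w - c') - linf)
      (conj w) = conj ((fun w => chiFun z1 m1 l1 (w - c) + chiFun z2 m2 l2 (w - c') - linf) w) :=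
    hFeq
  have hDcon : conj (chiDeriv z1 m1 l1 (x - c) + chiDeriv z2 m2 l2 (x - c'))
      = chiDeriv z1 m1 l1 (x - c) + chiDeriv z2 m2 l2 (x - c') :=
    conj_deriv_of_equivariant hFeq' hxeq hDx
  have hdim : d.im = 0 := Complex.conj_eq_iff_im.mp hdR
  have hDim : (chiDeriv z1 m1 l1 (x - c) + chiDeriv z2 m2 l2 (x - c')).im = 0 :=
    Complex.conj_eq_iff_im.mp hDcon
  refine ⟨Complex.conj_eq_iff_im.mp hxeq, hDx, hDim, ?_⟩
  set D := chiDeriv z1 m1 l1 (x - c) + chiDeriv z2 m2 l2 (x - c') with hDdef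
  have hnd : ‖d‖ = |d.re| := by
    have h12 : d = (d.re : ℂ) := Complex.ext (by simp) (by simp [hdim])
    calc ‖d‖ = ‖((d.re : ℝ) : ℂ)‖ := by rw [← h12]
      _ = |d.re| := by rw [Complex.norm_real, Real.norm_eq_abs]
  have hre : |D.re - d.re| ≤ |d.re|/2 := by
    calc |D.re - d.re| = |(D - d).re| := by rw [Complex.sub_re]
      _ ≤ ‖D - d‖ := Complex.abs_re_le_norm _
      _ = ‖D - d‖ := rfl
      _ ≤ ‖d‖/2 := hbound
      _ = |d.re|/2 := by rw [hnd]
  have hdre : d.re ≠ 0 := by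
    intro h
    apply hd
    exact Complex.ext (by simp [h]) (by simp [hdim])
  rw [hdval]
  obtain ⟨h1, h2⟩ := abs_le.mp hre
  rcases lt_or_gt_of_ne hdre with h | h
  · rw [abs_of_neg h] at h1 h2
    nlinarith
  · rw [abs_of_pos h] at h1 h2
    nlinarith

/-- **Reality of the coupled zeros** (Lemma C.4).
Assume `ℓ^∞` is real and `χ₁`, `χ₂` are conjugation-equivariant, so that the coupled twist
function `φ_γ` is conjugation-equivariant for real `γ`.  If the zero `ζ^{(k)}_i` of the
decoupled twist function is real then, for all sufficiently small real `γ ≠ 0`, the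
corresponding zero `ζ_i(γ)` of `φ_γ` is real, and `φ_γ'(ζ_i(γ))` is a nonzero real number of
the same sign as `φ_k'(ζ^{(k)}_i)`. -/
theorem reality_of_coupled_zeros
    {n₁ n₂ M₁ M₂ : ℕ}
    (z1 : Fin n₁ → ℂ) (m1 : Fin n₁ → ℕ) (l1 : Fin n₁ → ℕ → ℂ)
    (z2 : Fin n₂ → ℂ) (m2 : Fin n₂ → ℕ) (l2 : Fin n₂ → ℕ → ℂ)
    (linf : ℂ) (hlinf : linf ≠ 0)
    (hz1 : Function.Injective z1) (hz2 : Function.Injective z2)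
    (hl1 : ∀ a, l1 a (m1 a) ≠ 0) (hl2 : ∀ a, l2 a (m2 a) ≠ 0)
    (hM1 : M₁ = ∑ a, (m1 a + 1)) (hM2 : M₂ = ∑ a, (m2 a + 1))
    (ζ1 : Fin M₁ → ℂ) (ζ2 : Fin M₂ → ℂ)
    (hζ1inj : Function.Injective ζ1) (hζ2inj : Function.Injective ζ2)
    (hζ1p : ∀ i a, ζ1 i ≠ z1 a) (hζ2p : ∀ j a, ζ2 j ≠ z2 a)
    (hζ1z : ∀ i, chiFun z1 m1 l1 (ζ1 i) - linf = 0)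
    (hζ2z : ∀ j, chiFun z2 m2 l2 (ζ2 j) - linf = 0)
    (hζ1s : ∀ i, deriv (fun w => chiFun z1 m1 l1 w - linf) (ζ1 i) ≠ 0)
    (hζ2s : ∀ j, deriv (fun w => chiFun z2 m2 l2 w - linf) (ζ2 j) ≠ 0)
    -- reality assumptions: `ℓ^∞` real, `χ₁`, `χ₂` conjugation-equivariant
    (hlinfR : conj linf = linf)
    (hc1 : ∀ w : ℂ, chiFun z1 m1 l1 (conj w) = conj (chiFun z1 m1 l1 w))
    (hc2 : ∀ w : ℂ, chiFun z2 m2 l2 (conj w) = conj (chiFun z2 m2 l2 w))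
    -- the zeros `ζ i γ` of the coupled twist function provided by the decoupling lemma
    (ε C : ℝ) (hε : 0 < ε) (hC : 0 < C)
    (ζ : Fin M₁ ⊕ Fin M₂ → ℝ → ℂ)
    (hζ : ∀ γ : ℝ, 0 < |γ| → |γ| < ε →
      (Function.Injective fun i => ζ i γ) ∧
      (∀ i, chiFun z1 m1 l1 (ζ i γ) + chiFun z2 m2 l2 (ζ i γ - (γ : ℂ)⁻¹) - linf = 0 ∧
        deriv (fun w => chiFun z1 m1 l1 w + chiFun z2 m2 l2 (w - (γ : ℂ)⁻¹) - linf)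
          (ζ i γ) ≠ 0) ∧
      (∀ i : Fin M₁, ‖ζ (Sum.inl i) γ - ζ1 i‖ ≤ C * |γ|) ∧
      (∀ j : Fin M₂, ‖ζ (Sum.inr j) γ - (γ : ℂ)⁻¹ - ζ2 j‖ ≤ C * |γ|))
    -- the zero `ζ^{(k)}_i` under consideration is real
    (i : Fin M₁ ⊕ Fin M₂)
    (hreal : (Sum.elim ζ1 ζ2 i).im = 0) :
    ∃ ε' > (0 : ℝ), ∀ γ : ℝ, 0 < |γ| → |γ| < ε' →
      -- `ζ_i(γ)` is real …
      (ζ i γ).im = 0 ∧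
      -- … and `φ_γ'(ζ_i(γ))` is a nonzero real number of the same sign as `φ_k'(ζ^{(k)}_i)`
      (deriv (fun w => chiFun z1 m1 l1 w + chiFun z2 m2 l2 (w - (γ : ℂ)⁻¹) - linf)
        (ζ i γ)).im = 0 ∧
      0 < (deriv (fun w => chiFun z1 m1 l1 w + chiFun z2 m2 l2 (w - (γ : ℂ)⁻¹) - linf)
            (ζ i γ)).re
          * (Sum.elim (fun i => deriv (fun w => chiFun z1 m1 l1 w - linf) (ζ1 i))
              (fun j => deriv (fun w => chiFun z2 m2 l2 w - linf) (ζ2 j)) i).re := by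
  rcases i with i₀ | j₀
  · have hreal' : (ζ1 i₀).im = 0 := by simpa using hreal
    obtain ⟨ε₀, hε₀, hmain⟩ := case_main z1 m1 l1 z2 m2 l2 linf hlinfR hc1 hc2 (ζ1 i₀) hreal'
      (hζ1p i₀) (hζ1s i₀) C hC
    refine ⟨min ε ε₀, lt_min hε hε₀, fun γ hγ0 hγ => ?_⟩
    obtain ⟨-, hzero, hclose1, -⟩ := hζ γ hγ0 (lt_of_lt_of_le hγ (min_le_left _ _))
    obtain ⟨hz, -⟩ := hzero (Sum.inl i₀)
    have hγne : (|γ| : ℝ) ≠ 0 := ne_of_gt hγ0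
    have hdist : ‖(0:ℂ) - ((γ:ℝ):ℂ)⁻¹‖ * |γ| = 1 := by
      rw [zero_sub, norm_neg, ← Complex.ofReal_inv, Complex.norm_real, Real.norm_eq_abs,
        abs_inv]
      exact inv_mul_cancel₀ hγne
    have hcR : conj (0:ℂ) = 0 := by simp
    have hc'R : conj (((γ:ℝ):ℂ)⁻¹) = ((γ:ℝ):ℂ)⁻¹ := by
      rw [← Complex.ofReal_inv]; exact Complex.conj_ofReal _
    have hxclose : ‖ζ (Sum.inl i₀) γ - 0 - ζ1 i₀‖ ≤ C * |γ| := by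
      simpa using hclose1 i₀
    have hFx : chiFun z1 m1 l1 (ζ (Sum.inl i₀) γ - 0)
        + chiFun z2 m2 l2 (ζ (Sum.inl i₀) γ - ((γ:ℝ):ℂ)⁻¹) - linf = 0 := by
      simpa using hz
    obtain ⟨him, hDer, hDim, hsign⟩ := hmain γ hγ0 (lt_of_lt_of_le hγ (min_le_right _ _))
      0 (((γ:ℝ):ℂ)⁻¹) hcR hc'R hdist _ hxclose hFx
    simp only [sub_zero] at hDer hDim hsign
    refine ⟨him, ?_, ?_⟩
    · rw [hDer.deriv]; exact hDim
    · rw [hDer.deriv]; simpa using hsign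
  · have hreal' : (ζ2 j₀).im = 0 := by simpa using hreal
    obtain ⟨ε₀, hε₀, hmain⟩ := case_main z2 m2 l2 z1 m1 l1 linf hlinfR hc2 hc1 (ζ2 j₀) hreal'
      (hζ2p j₀) (hζ2s j₀) C hC
    refine ⟨min ε ε₀, lt_min hε hε₀, fun γ hγ0 hγ => ?_⟩
    obtain ⟨-, hzero, -, hclose2⟩ := hζ γ hγ0 (lt_of_lt_of_le hγ (min_le_left _ _))
    obtain ⟨hz, -⟩ := hzero (Sum.inr j₀)
    have hγne : (|γ| : ℝ) ≠ 0 := ne_of_gt hγ0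
    have hdist : ‖((γ:ℝ):ℂ)⁻¹ - 0‖ * |γ| = 1 := by
      rw [sub_zero, ← Complex.ofReal_inv, Complex.norm_real, Real.norm_eq_abs, abs_inv]
      exact inv_mul_cancel₀ hγne
    have hc'R : conj (0:ℂ) = 0 := by simp
    have hcR : conj (((γ:ℝ):ℂ)⁻¹) = ((γ:ℝ):ℂ)⁻¹ := by
      rw [← Complex.ofReal_inv]; exact Complex.conj_ofReal _
    have hxclose : ‖ζ (Sum.inr j₀) γ - ((γ:ℝ):ℂ)⁻¹ - ζ2 j₀‖ ≤ C * |γ| := hclose2 j₀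
    have hFx : chiFun z2 m2 l2 (ζ (Sum.inr j₀) γ - ((γ:ℝ):ℂ)⁻¹)
        + chiFun z1 m1 l1 (ζ (Sum.inr j₀) γ - 0) - linf = 0 := by
      rw [sub_zero]
      linear_combination hz
    obtain ⟨him, hDer, hDim, hsign⟩ := hmain γ hγ0 (lt_of_lt_of_le hγ (min_le_right _ _))
      (((γ:ℝ):ℂ)⁻¹) 0 hcR hc'R hdist _ hxclose hFx
    simp only [sub_zero] at hDer hDim hsign
    have heq : (fun w => chiFun z1 m1 l1 w + chiFun z2 m2 l2 (w - ((γ:ℝ):ℂ)⁻¹) - linf)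
        = fun w => chiFun z2 m2 l2 (w - ((γ:ℝ):ℂ)⁻¹) + chiFun z1 m1 l1 w - linf :=
      funext fun w => by ring
    refine ⟨him, ?_, ?_⟩
    · rw [heq, hDer.deriv]; exact hDim
    · rw [heq, hDer.deriv]; simpa using hsign
end
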